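/- arXiv:2002.00330 — 8 statements merged into one kernel-verified Lean document; each statement's English description precedes it below -/
import Mathlib

section
/- Let K be a field of characteristic zero and let D = ∂_x + Σⱼ₌₁ʳ (a(x)yⱼ + bⱼ(x)) ∂_{yⱼ} be a derivation of R = K[x, y₁, …, y_r] with a, bⱼ ∈ K[x]. If ρ is a K-algebra automorphism of R commuting with D, then ρ(x) ∈ K[x], i.e., ρ(x) contains no variables yⱼ, provided a(x) ≠ 0. -/
open MvPolynomial

theorem myCoeffPderiv {σ : Type*} [DecidableEq σ] {K : Type*} [CommSemiring K]
    (i : σ) (q : MvPolynomial σ K) (v : σ →₀ ℕ) :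
    coeff v (pderiv i q) = ((v i + 1 : ℕ) : K) * coeff (v + Finsupp.single i 1) q := by
  induction q using MvPolynomial.induction_on' with
  | add p q hp hq => simp [hp, hq, mul_add]
  | monomial u c =>
    rw [pderiv_monomial, coeff_monomial, coeff_monomial]
    by_cases h : u = v + Finsupp.single i 1
    · have h1 : u - Finsupp.single i 1 = v := by
        rw [h]; exact add_tsub_cancel_right _ _
      have h2 : u i = v i + 1 := by
        rw [h]; simp
      rw [if_pos h1, if_pos h, h2]
      push_cast
      ring
    · rw [if_neg h, mul_zero]
      split_ifs with h3
      · have h2 : u i = 0 := by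
          by_contra h2
          exact h (by rw [← h3, tsub_add_cancel_of_le
            (by rw [Finsupp.single_le_iff]; omega)])
        simp [h2]
      · rfl

theorem myCoeffXMulPderiv {σ : Type*} [DecidableEq σ] {K : Type*} [CommSemiring K]
    (j : σ) (q : MvPolynomial σ K) (v : σ →₀ ℕ) :
    coeff v (X j * pderiv j q) = (v j : K) * coeff v q := by
  rw [coeff_X_mul']
  split_ifs with h
  · rw [myCoeffPderiv]
    have h1 : v j ≠ 0 := Finsupp.mem_support_iff.mp h
    have h2 : ((v - Finsupp.single j 1 : σ →₀ ℕ) j) + 1 = v j := by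
      rw [Finsupp.tsub_apply, Finsupp.single_eq_same]; omega
    have h3 : v - Finsupp.single j 1 + Finsupp.single j 1 = v := by
      rw [tsub_add_cancel_of_le]
      rw [Finsupp.single_le_iff]; omega
    rw [h2, h3]
  · have h1 : v j = 0 := by simpa [Finsupp.mem_support_iff] using h
    simp [h1]

theorem myDerivSumApply {R A M ι : Type*} [CommSemiring R] [CommSemiring A] [Algebra R A]
    [AddCommMonoid M] [Module A M] [Module R M] (s : Finset ι)
    (d : ι → Derivation R A M) (x : A) :
    (∑ i ∈ s, d i) x = ∑ i ∈ s, d i x :=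
  map_sum (⟨⟨fun (D : Derivation R A M) => D x, rfl⟩, fun _ _ => rfl⟩ :
    Derivation R A M →+ M) d s

/-- For a Shamsuddin derivation `D = ∂x + Σ (a(x)yⱼ + bⱼ(x)) ∂yⱼ` with `a ≠ 0`,
any automorphism `ρ` commuting with `D` satisfies `ρ(x) ∈ K[x]`. -/
theorem stmt6 {K : Type*} [Field K] [CharZero K] (r : ℕ)
    (a : Polynomial K) (ha : a ≠ 0) (b : Fin r → Polynomial K)
    (D : Derivation K (MvPolynomial (Option (Fin r)) K) (MvPolynomial (Option (Fin r)) K))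
    (hDx : D (MvPolynomial.X none) = 1)
    (hDy : ∀ j : Fin r, D (MvPolynomial.X (some j)) =
      Polynomial.aeval (MvPolynomial.X (none : Option (Fin r))) a * MvPolynomial.X (some j) +
        Polynomial.aeval (MvPolynomial.X (none : Option (Fin r))) (b j))
    (ρ : MvPolynomial (Option (Fin r)) K ≃ₐ[K] MvPolynomial (Option (Fin r)) K)
    (hρ : ∀ p, ρ (D p) = D (ρ p)) :
    ∃ p : Polynomial K,
      ρ (MvPolynomial.X none) = Polynomial.aeval (MvPolynomial.X (none : Option (Fin r))) p := by
  classical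
  set A : MvPolynomial (Option (Fin r)) K :=
    Polynomial.aeval (MvPolynomial.X (none : Option (Fin r))) a with hAdef
  set B : Fin r → MvPolynomial (Option (Fin r)) K :=
    fun j => Polynomial.aeval (MvPolynomial.X (none : Option (Fin r))) (b j) with hBdef
  set q : MvPolynomial (Option (Fin r)) K := ρ (MvPolynomial.X none) with hq
  -- D q = 1
  have h1 : D q = 1 := by
    rw [hq, ← hρ, hDx, map_one]
  -- decomposition of D
  have hD : D = pderiv none + ∑ j : Fin r, (A * X (some j) + B j) • pderiv (some j) := by
    apply MvPolynomial.derivation_ext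
    intro i
    have hsum : ∀ x, (∑ j : Fin r, (A * X (some j) + B j) • pderiv (some j)) x
        = ∑ j : Fin r, (A * X (some j) + B j) * pderiv (some j) x := by
      intro x
      rw [myDerivSumApply]
      simp [Derivation.coe_smul, smul_eq_mul]
    cases i with
    | none =>
      rw [hDx, Derivation.add_apply, hsum]
      simp
    | some j =>
      rw [hDy j, Derivation.add_apply, hsum]
      rw [Finset.sum_eq_single j]
      · simp [hBdef]
      · intro k _ hk
        simp [pderiv_X, Pi.single_apply, hk]
      · simp
  have hDapp : ∀ p, D p = pderiv none p
      + ∑ j : Fin r, (A * X (some j) + B j) * (pderiv (some j) p) := by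
    intro p
    rw [hD, Derivation.add_apply, myDerivSumApply]
    simp [Derivation.coe_smul, smul_eq_mul]
  -- the y-degree
  set degY : (Option (Fin r) →₀ ℕ) → ℕ := fun u => ∑ j : Fin r, u (some j) with hdegY
  set d : ℕ := q.support.sup degY with hd
  by_cases hd0 : d = 0
  · -- q is a polynomial in x only
    have hconst : ∀ u ∈ q.support, ∀ j : Fin r, u (some j) = 0 := by
      intro u hu j
      have h2 : degY u ≤ d := Finset.le_sup (f := degY) hu
      rw [hd0, Nat.le_zero, hdegY] at h2
      have := Finset.sum_eq_zero_iff.mp h2 j (Finset.mem_univ j)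
      exact this
    have hmem : q ∈ Algebra.adjoin K {X (none : Option (Fin r))} := by
      rw [q.as_sum]
      apply Subalgebra.sum_mem
      intro u hu
      have hu2 : u = Finsupp.single none (u none) := by
        ext i
        cases i with
        | none => simp
        | some j => simp [Finsupp.single_apply, hconst u hu j]
      rw [hu2, ← C_mul_X_pow_eq_monomial]
      exact Subalgebra.mul_mem _ (Subalgebra.algebraMap_mem _ _)
        (Subalgebra.pow_mem _ (Algebra.subset_adjoin (Set.mem_singleton _)) _)
    rw [Algebra.adjoin_singleton_eq_range_aeval] at hmem
    obtain ⟨p, hp⟩ := hmem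
    exact ⟨p, hp.symm⟩
  · -- contradiction
    exfalso
    have hq0 : q ≠ 0 := by
      intro h
      rw [h, map_zero] at h1
      exact zero_ne_one h1
    obtain ⟨u₁, hu₁, hu₁d⟩ :=
      Finset.exists_mem_eq_sup q.support (support_nonempty.mpr hq0) degY
    set S := q.support.filter (fun u => degY u = d) with hS
    have hSne : S.Nonempty := ⟨u₁, by simp [hS, hu₁, hu₁d.symm, hd.symm]⟩
    obtain ⟨u₀, hu₀S, hmax⟩ := Finset.exists_max_image S (fun u => u none) hSne
    have hu₀ : u₀ ∈ q.support := (Finset.mem_filter.mp hu₀S).1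
    have hu₀d : degY u₀ = d := (Finset.mem_filter.mp hu₀S).2
    have hvan : ∀ s, degY s = d → u₀ none < s none → coeff s q = 0 := by
      intro s hs hlt
      by_contra hc
      exact absurd (hmax s (Finset.mem_filter.mpr ⟨mem_support_iff.mpr hc, hs⟩))
        (not_le.mpr hlt)
    have hbig : ∀ s, d < degY s → coeff s q = 0 := by
      intro s hs
      by_contra hc
      exact absurd (Finset.le_sup (f := degY) (mem_support_iff.mpr hc)) (not_le.mpr hs)
    set na := a.natDegree with hna
    set v := u₀ + Finsupp.single none na with hv
    -- degY facts
    have hdegY_addn : ∀ (u : Option (Fin r) →₀ ℕ) (k : ℕ),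
        degY (u + Finsupp.single none k) = degY u := by
      intro u k
      simp [hdegY, Finsupp.single_apply]
    have hdegY_subn : ∀ (u : Option (Fin r) →₀ ℕ) (k : ℕ),
        degY (u - Finsupp.single none k) = degY u := by
      intro u k
      simp [hdegY, Finsupp.tsub_apply, Finsupp.single_apply]
    have hdegY_adds : ∀ (u : Option (Fin r) →₀ ℕ) (j : Fin r),
        degY (u + Finsupp.single (some j) 1) = degY u + 1 := by
      intro u j
      simp only [hdegY, Finsupp.add_apply]
      rw [Finset.sum_add_distrib]
      congr 1
      rw [Finset.sum_eq_single j]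
      · simp
      · intro k _ hk
        simp [Finsupp.single_apply, Ne.symm hk]
      · simp
    have hvnone : v none = u₀ none + na := by simp [hv]
    have hvdeg : degY v = d := by rw [hv, hdegY_addn, hu₀d]
    -- coefficient of aeval products
    have haeval : ∀ (f : Polynomial K) (g : MvPolynomial (Option (Fin r)) K),
        coeff v (Polynomial.aeval (X (none : Option (Fin r))) f * g)
          = ∑ k ∈ f.support, if Finsupp.single (none : Option (Fin r)) k ≤ v
              then f.coeff k * coeff (v - Finsupp.single none k) g else 0 := by
      intro f g
      have hf : Polynomial.aeval (X (none : Option (Fin r))) f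
          = ∑ k ∈ f.support, monomial (Finsupp.single none k) (f.coeff k) := by
        rw [Polynomial.aeval_def, Polynomial.eval₂_eq_sum, Polynomial.sum_def]
        refine Finset.sum_congr rfl fun k _ => ?_
        rw [← C_mul_X_pow_eq_monomial, MvPolynomial.algebraMap_eq]
      rw [hf, Finset.sum_mul, MvPolynomial.coeff_sum]
      exact Finset.sum_congr rfl fun k _ => coeff_monomial_mul' _ _ _ _
    have hsingle_le : ∀ k : ℕ, k ∈ a.support → Finsupp.single (none : Option (Fin r)) k ≤ v := by
      intro k hk
      rw [Finsupp.single_le_iff, hvnone]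
      exact le_trans (Polynomial.le_natDegree_of_mem_supp k hk) (Nat.le_add_left _ _)
    -- the three kinds of terms
    have hterm0 : coeff v (pderiv (none : Option (Fin r)) q) = 0 := by
      rw [myCoeffPderiv]
      have : coeff (v + Finsupp.single (none : Option (Fin r)) 1) q = 0 := by
        apply hvan
        · rw [hdegY_addn, hvdeg]
        · simp only [Finsupp.add_apply, hvnone, Finsupp.single_eq_same]
          omega
      rw [this, mul_zero]
    have htermB : ∀ j : Fin r, coeff v (B j * pderiv (some j) q) = 0 := by
      intro j
      rw [hBdef, haeval]
      apply Finset.sum_eq_zero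
      intro k _
      split_ifs with h
      · rw [myCoeffPderiv]
        have : coeff (v - Finsupp.single (none : Option (Fin r)) k
            + Finsupp.single (some j) 1) q = 0 := by
          apply hbig
          rw [hdegY_adds, hdegY_subn, hvdeg]
          omega
        rw [this, mul_zero, mul_zero]
      · rfl
    have htermA : ∀ j : Fin r, coeff v (A * (X (some j) * pderiv (some j) q))
        = a.coeff na * ((u₀ (some j) : K) * coeff u₀ q) := by
      intro j
      rw [hAdef, haeval]
      rw [Finset.sum_eq_single_of_mem na (Polynomial.natDegree_mem_support_of_nonzero ha)]
      · rw [if_pos (hsingle_le na (Polynomial.natDegree_mem_support_of_nonzero ha))]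
        have hvsub : v - Finsupp.single (none : Option (Fin r)) na = u₀ := by
          ext i
          rw [Finsupp.tsub_apply]
          cases i with
          | none => simp [hvnone]
          | some j' => simp [hv, Finsupp.single_apply]
        rw [hvsub, myCoeffXMulPderiv]
      · intro k hk hkne
        rw [if_pos (hsingle_le k hk)]
        have hklt : k < na := lt_of_le_of_ne (Polynomial.le_natDegree_of_mem_supp k hk) hkne
        have : coeff (v - Finsupp.single (none : Option (Fin r)) k) q = 0 := by
          apply hvan
          · rw [hdegY_subn, hvdeg]
          · rw [Finsupp.tsub_apply, hvnone]
            simp only [Finsupp.single_eq_same]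
            omega
        rw [myCoeffXMulPderiv, this, mul_zero, mul_zero]
    -- put everything together
    have hcoeffD : coeff v (D q) = (d : K) * (a.coeff na * coeff u₀ q) := by
      rw [hDapp q, coeff_add, MvPolynomial.coeff_sum, hterm0, zero_add]
      have : ∀ j : Fin r, coeff v ((A * X (some j) + B j) * pderiv (some j) q)
          = a.coeff na * ((u₀ (some j) : K) * coeff u₀ q) := by
        intro j
        rw [add_mul, mul_assoc, coeff_add, htermA j, htermB j, add_zero]
      rw [Finset.sum_congr rfl fun j _ => this j]
      rw [← hu₀d, hdegY]
      push_cast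
      rw [Finset.sum_mul]
      refine Finset.sum_congr rfl fun j _ => ?_
      ring
    have hvne : v ≠ 0 := by
      intro h
      rw [h] at hvdeg
      simp [hdegY] at hvdeg
      omega
    rw [h1, coeff_one, if_neg (fun h => hvne h.symm)] at hcoeffD
    have h2 : (d : K) ≠ 0 := Nat.cast_ne_zero.mpr hd0
    have h3 : a.coeff na ≠ 0 := by
      rw [hna, ← Polynomial.leadingCoeff]
      exact Polynomial.leadingCoeff_ne_zero.mpr ha
    have h4 : coeff u₀ q ≠ 0 := mem_support_iff.mp hu₀
    exact (mul_ne_zero h2 (mul_ne_zero h3 h4)) hcoeffD.symm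
end

section
/- Let K be a field of characteristic zero and let D = ∂_x + Σⱼ₌₁ʳ (a(x)yⱼ + bⱼ(x)) ∂_{yⱼ} be a Shamsuddin derivation of R = K[x, y₁, …, y_r]. Suppose there exist (k₁, …, k_r) ∈ Kʳ with k₁ = 1 and a polynomial Q ∈ K[x] such that Q' = a·Q + Σⱼ kⱼ bⱼ. Then for every e ∈ K with e ≠ 0 and e ≠ 1, the K-algebra endomorphism ρ of R defined by ρ(x) = x, ρ(y₁) = (1-e)y₁ - e·Σⱼ₌₂ʳ kⱼ yⱼ + e·Q(x), and ρ(yⱼ) = yⱼ for j ≥ 2, is an automorphism of R commuting with D, and ρ ≠ id. -/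
open MvPolynomial

namespace Stmt9Aux

variable {K : Type*} [Field K] {r : ℕ} (z : Fin r) (k : Fin r → K) (Q : Polynomial K)

noncomputable def S : MvPolynomial (Option (Fin r)) K :=
  ∑ j ∈ Finset.univ.erase z, C (k j) * X (some j)

noncomputable def Qx : MvPolynomial (Option (Fin r)) K :=
  Polynomial.aeval (X none) Q

noncomputable def F (c : K) : Option (Fin r) → MvPolynomial (Option (Fin r)) K
  | none => X none
  | some j =>
      if j = z then C (1 - c) * X (some z) - C c * S z k + C c * Qx Q else X (some j)

noncomputable def σ (c : K) :
    MvPolynomial (Option (Fin r)) K →ₐ[K] MvPolynomial (Option (Fin r)) K :=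
  aeval (F z k Q c)

lemma σ_x (c : K) : σ z k Q c (X none) = X none := by simp [σ, F]

lemma σ_C (c x : K) : σ z k Q c (C x) = C x := by
  simp [σ, algebraMap_eq]

lemma σ_yj (c : K) {j : Fin r} (hj : j ≠ z) :
    σ z k Q c (X (some j)) = X (some j) := by simp [σ, F, hj]

lemma σ_yz (c : K) :
    σ z k Q c (X (some z)) = C (1 - c) * X (some z) - C c * S z k + C c * Qx Q := by
  simp [σ, F]

lemma σ_S (c : K) : σ z k Q c (S z k) = S z k := by
  unfold S
  rw [map_sum]
  refine Finset.sum_congr rfl fun j hj => ?_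
  rw [map_mul, σ_yj _ _ _ _ (Finset.ne_of_mem_erase hj), σ_C]

lemma σ_Qx (c : K) : σ z k Q c (Qx Q) = Qx Q := by
  unfold Qx
  rw [← Polynomial.aeval_algHom_apply, σ_x]

lemma σ_comp (c c' : K) :
    (σ z k Q c).comp (σ z k Q c') = σ z k Q (c + c' - c * c') := by
  apply algHom_ext
  intro i
  cases i with
  | none => simp [σ_x]
  | some j =>
    rcases eq_or_ne j z with rfl | hj
    · simp only [AlgHom.comp_apply, σ_yz, map_add, map_sub, map_mul, σ_S, σ_Qx, σ_C]
      simp only [map_sub, map_add, map_mul, map_one]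
      ring
    · simp [σ_yj _ _ _ _ hj]

lemma σ_zero : σ z k Q 0 = AlgHom.id K _ := by
  apply algHom_ext
  intro i
  cases i with
  | none => simp [σ_x]
  | some j =>
    rcases eq_or_ne j z with rfl | hj
    · simp [σ_yz]
    · simp [σ_yj _ _ _ _ hj]

end Stmt9Aux

/-- If `Q' = a·Q + Σⱼ kⱼ bⱼ` with `k₁ = 1`, then for every `e ∈ K \ {0,1}` the map
`x ↦ x`, `y₁ ↦ (1-e)y₁ - e·Σ_{j≥2} kⱼ yⱼ + e·Q(x)`, `yⱼ ↦ yⱼ (j ≥ 2)` is a non-identity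
automorphism commuting with `D = ∂x + Σⱼ (a(x)yⱼ + bⱼ(x)) ∂yⱼ`. -/
theorem stmt9 {K : Type*} [Field K] [CharZero K] (r : ℕ) (hr : 0 < r)
    (a : Polynomial K) (b : Fin r → Polynomial K)
    (D : Derivation K (MvPolynomial (Option (Fin r)) K) (MvPolynomial (Option (Fin r)) K))
    (hDx : D (MvPolynomial.X none) = 1)
    (hDy : ∀ j : Fin r, D (MvPolynomial.X (some j)) =
      Polynomial.aeval (MvPolynomial.X (none : Option (Fin r))) a * MvPolynomial.X (some j) +
        Polynomial.aeval (MvPolynomial.X (none : Option (Fin r))) (b j))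
    (k : Fin r → K) (hk1 : k ⟨0, hr⟩ = 1) (Q : Polynomial K)
    (hQ : Polynomial.derivative Q = a * Q + ∑ j : Fin r, Polynomial.C (k j) * b j) :
    ∀ e : K, e ≠ 0 → e ≠ 1 →
      ∃ ρ : MvPolynomial (Option (Fin r)) K ≃ₐ[K] MvPolynomial (Option (Fin r)) K,
        (∀ p, ρ (D p) = D (ρ p)) ∧
        ρ (MvPolynomial.X none) = MvPolynomial.X none ∧
        ρ (MvPolynomial.X (some ⟨0, hr⟩)) =
          MvPolynomial.C (1 - e) * MvPolynomial.X (some ⟨0, hr⟩) -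
            MvPolynomial.C e *
              (∑ j ∈ Finset.univ.erase (⟨0, hr⟩ : Fin r),
                MvPolynomial.C (k j) * MvPolynomial.X (some j)) +
            MvPolynomial.C e *
              Polynomial.aeval (MvPolynomial.X (none : Option (Fin r))) Q ∧
        (∀ j : Fin r, j ≠ ⟨0, hr⟩ → ρ (MvPolynomial.X (some j)) = MvPolynomial.X (some j)) ∧
        ρ ≠ AlgEquiv.refl := by
  classical
  intro e he0 he1
  set z : Fin r := ⟨0, hr⟩ with hzdef
  have he1' : e - 1 ≠ 0 := sub_ne_zero.mpr he1
  set e' : K := e / (e - 1) with he'def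
  have hkey : e + e' - e * e' = 0 := by
    field_simp [he'def]
    rw [he'def]; linear_combination (-e) * mul_inv_cancel₀ he1'
  have hinv1 : (Stmt9Aux.σ z k Q e).comp (Stmt9Aux.σ z k Q e') = AlgHom.id K _ := by
    rw [Stmt9Aux.σ_comp, hkey, Stmt9Aux.σ_zero]
  have hinv2 : (Stmt9Aux.σ z k Q e').comp (Stmt9Aux.σ z k Q e) = AlgHom.id K _ := by
    rw [Stmt9Aux.σ_comp, show e' + e - e' * e = 0 by linear_combination hkey,
      Stmt9Aux.σ_zero]
  let ρ : MvPolynomial (Option (Fin r)) K ≃ₐ[K] MvPolynomial (Option (Fin r)) K :=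
    AlgEquiv.ofAlgHom (Stmt9Aux.σ z k Q e) (Stmt9Aux.σ z k Q e') hinv1 hinv2
  have hρ : ∀ p, ρ p = Stmt9Aux.σ z k Q e p := fun _ => rfl
  have hρs : ∀ p, ρ.symm p = Stmt9Aux.σ z k Q e' p := fun _ => rfl
  have hAfix : ∀ (c : K) (p : Polynomial K),
      Stmt9Aux.σ z k Q c (Polynomial.aeval (MvPolynomial.X none) p) =
        Polynomial.aeval (MvPolynomial.X none) p := by
    intro c p
    rw [← Polynomial.aeval_algHom_apply, Stmt9Aux.σ_x]
  have hsmul : ∀ (c : K) (p : MvPolynomial (Option (Fin r)) K),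
      D (MvPolynomial.C c * p) = MvPolynomial.C c * D p := by
    intro c p
    rw [← MvPolynomial.smul_eq_C_mul, Derivation.map_smul, MvPolynomial.smul_eq_C_mul]
  have hDS : D (Stmt9Aux.S z k) =
      Polynomial.aeval (MvPolynomial.X (none : Option (Fin r))) a * Stmt9Aux.S z k +
        ∑ j ∈ Finset.univ.erase z, MvPolynomial.C (k j) *
          Polynomial.aeval (MvPolynomial.X (none : Option (Fin r))) (b j) := by
    unfold Stmt9Aux.S
    rw [map_sum, Finset.mul_sum, ← Finset.sum_add_distrib]
    refine Finset.sum_congr rfl fun j hj => ?_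
    rw [hsmul, hDy j, mul_add]
    ring
  have hDQx : D (Stmt9Aux.Qx Q) =
      Polynomial.aeval (MvPolynomial.X (none : Option (Fin r))) a * Stmt9Aux.Qx Q +
        (Polynomial.aeval (MvPolynomial.X (none : Option (Fin r))) (b z) +
          ∑ j ∈ Finset.univ.erase z, MvPolynomial.C (k j) *
            Polynomial.aeval (MvPolynomial.X (none : Option (Fin r))) (b j)) := by
    unfold Stmt9Aux.Qx
    rw [Derivation.map_aeval, hDx, smul_eq_mul, mul_one, hQ, map_add, map_mul, map_sum]
    rw [← Finset.add_sum_erase _ _ (Finset.mem_univ z)]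
    congr 1
    congr 1
    · rw [map_mul, Polynomial.aeval_C, hzdef, hk1, map_one, one_mul]
    · refine Finset.sum_congr rfl fun j hj => ?_
      rw [map_mul, Polynomial.aeval_C, MvPolynomial.algebraMap_eq]
  have hgen : ∀ i, Stmt9Aux.σ z k Q e (D (MvPolynomial.X i)) =
      D (Stmt9Aux.σ z k Q e (MvPolynomial.X i)) := by
    intro i
    cases i with
    | none => rw [hDx, map_one, Stmt9Aux.σ_x, hDx]
    | some j =>
      rcases eq_or_ne j z with rfl | hj
      · rw [hDy z, map_add, map_mul, hAfix, hAfix, Stmt9Aux.σ_yz,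
          Derivation.map_add, Derivation.map_sub, hsmul, hsmul, hsmul, hDS, hDQx, hDy z]
        simp only [map_sub, map_one]
        ring
      · rw [Stmt9Aux.σ_yj _ _ _ _ hj, hDy j, map_add, map_mul, hAfix, hAfix,
          Stmt9Aux.σ_yj _ _ _ _ hj]
  have hcomm : ∀ p, ρ (D p) = D (ρ p) := by
    have hE : ∃ E : Derivation K (MvPolynomial (Option (Fin r)) K)
        (MvPolynomial (Option (Fin r)) K), ∀ p, E p = ρ.symm (D (ρ p)) := by
      refine ⟨⟨ρ.symm.toLinearMap.comp (D.toLinearMap.comp ρ.toLinearMap), ?_, ?_⟩,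
        fun p => rfl⟩
      · show ρ.symm (D (ρ 1)) = 0
        rw [map_one, Derivation.map_one_eq_zero, map_zero]
      · intro p q
        show ρ.symm (D (ρ (p * q))) = p • ρ.symm (D (ρ q)) + q • ρ.symm (D (ρ p))
        rw [map_mul, Derivation.leibniz, map_add, smul_eq_mul, smul_eq_mul,
          map_mul, map_mul, AlgEquiv.symm_apply_apply, AlgEquiv.symm_apply_apply,
          smul_eq_mul, smul_eq_mul]
    obtain ⟨E, hEap⟩ := hE
    have hED : E = D := by
      apply MvPolynomial.derivation_ext
      intro i
      rw [hEap, hρ (MvPolynomial.X i), ← hgen i, ← hρ (D (MvPolynomial.X i)),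
        AlgEquiv.symm_apply_apply]
    intro p
    have h1 : ρ.symm (D (ρ p)) = D p := by rw [← hEap, hED]
    rw [← h1, AlgEquiv.apply_symm_apply]
  refine ⟨ρ, hcomm, Stmt9Aux.σ_x z k Q e, ?_, ?_, ?_⟩
  · exact Stmt9Aux.σ_yz z k Q e
  · intro j hj
    exact Stmt9Aux.σ_yj z k Q e hj
  · intro hcontra
    set v : Option (Fin r) → K := fun i => match i with
      | none => 0
      | some j => if j = z then Polynomial.eval 0 Q + 1 else 0 with hv
    have h2 := congrArg
      (fun φ : MvPolynomial (Option (Fin r)) K ≃ₐ[K] MvPolynomial (Option (Fin r)) K =>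
        MvPolynomial.aeval v (φ (MvPolynomial.X (some z)))) hcontra
    simp only [AlgEquiv.coe_refl, id_eq] at h2
    rw [hρ, Stmt9Aux.σ_yz] at h2
    simp only [map_add, map_sub, map_mul, MvPolynomial.aeval_C, MvPolynomial.aeval_X,
      Stmt9Aux.S, Stmt9Aux.Qx, map_sum, ← Polynomial.aeval_algHom_apply] at h2
    simp only [hv] at h2
    rw [Finset.sum_eq_zero (fun j hj => by
      rw [if_neg (Finset.ne_of_mem_erase hj), mul_zero])] at h2
    simp only [if_true, Algebra.algebraMap_self_apply, mul_zero, sub_zero,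
      Polynomial.coe_aeval_eq_eval] at h2
    exact he0 (by linear_combination -h2)
end

section
/- Let K be a field of characteristic zero and let D = ∂_x + Σⱼ₌₁ⁿ (aⱼ(x)yⱼ + bⱼ(x, y₁, …, y_{j-1})) ∂_{yⱼ} be a derivation of K[x, y₁, …, y_n] of triangular-plus-linear type. If aⱼ ∈ K (i.e., each aⱼ is constant) for all j, then D is locally finite. -/
section Aux

variable {K : Type*} [Field K] {R : Type*} [CommRing R] [Algebra K R]

/-- `f` lies in a finitely generated `D`-stable submodule. -/
def HasLF (D : Derivation K R R) (f : R) : Prop :=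
  ∃ M : Submodule K R, Submodule.map D.toLinearMap M ≤ M ∧ M.FG ∧ f ∈ M

theorem HasLF.one (D : Derivation K R R) : HasLF D (1 : R) := by
  refine ⟨Submodule.span K {1}, ?_, Submodule.fg_span_singleton _,
    Submodule.mem_span_singleton_self _⟩
  rw [Submodule.map_span, Set.image_singleton,
    show D.toLinearMap (1 : R) = 0 from D.map_one_eq_zero]
  simp

theorem HasLF.algebraMap (D : Derivation K R R) (r : K) :
    HasLF D (algebraMap K R r) := by
  refine ⟨Submodule.span K {1}, ?_, Submodule.fg_span_singleton _, ?_⟩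
  · rw [Submodule.map_span, Set.image_singleton,
      show D.toLinearMap (1 : R) = 0 from D.map_one_eq_zero]
    simp
  · rw [Algebra.algebraMap_eq_smul_one]
    exact Submodule.smul_mem _ _ (Submodule.mem_span_singleton_self _)

theorem HasLF.add {D : Derivation K R R} {f g : R} (hf : HasLF D f) (hg : HasLF D g) :
    HasLF D (f + g) := by
  obtain ⟨M, hM, hMfg, hfM⟩ := hf
  obtain ⟨N, hN, hNfg, hgN⟩ := hg
  refine ⟨M ⊔ N, ?_, hMfg.sup hNfg, add_mem (Submodule.mem_sup_left hfM)
    (Submodule.mem_sup_right hgN)⟩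
  rw [Submodule.map_sup]
  exact sup_le (hM.trans le_sup_left) (hN.trans le_sup_right)

theorem HasLF.mul {D : Derivation K R R} {f g : R} (hf : HasLF D f) (hg : HasLF D g) :
    HasLF D (f * g) := by
  obtain ⟨M, hM, hMfg, hfM⟩ := hf
  obtain ⟨N, hN, hNfg, hgN⟩ := hg
  refine ⟨M * N, ?_, hMfg.mul hNfg, Submodule.mul_mem_mul hfM hgN⟩
  rw [Submodule.map_le_iff_le_comap]
  refine Submodule.mul_le.2 fun m hm n hn => ?_
  have hDm : D m ∈ M := hM ⟨m, hm, rfl⟩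
  have hDn : D n ∈ N := hN ⟨n, hn, rfl⟩
  show D.toLinearMap (m * n) ∈ M * N
  have : D.toLinearMap (m * n) = m * D n + D m * n := by
    show D (m * n) = _
    rw [Derivation.leibniz, smul_eq_mul, smul_eq_mul, mul_comm n (D m)]
  rw [this]
  exact add_mem (Submodule.mul_mem_mul hm hDn) (Submodule.mul_mem_mul hDm hn)

theorem HasLF.extend {D : Derivation K R R} {f y : R} (a : K) (hf : HasLF D f)
    (hy : D y = a • y + f) : HasLF D y := by
  obtain ⟨M, hM, hMfg, hfM⟩ := hf
  refine ⟨M ⊔ Submodule.span K {y}, ?_, hMfg.sup (Submodule.fg_span_singleton _),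
    Submodule.mem_sup_right (Submodule.mem_span_singleton_self _)⟩
  rw [Submodule.map_sup, Submodule.map_span, Set.image_singleton]
  refine sup_le (hM.trans le_sup_left) ?_
  rw [Submodule.span_le, Set.singleton_subset_iff]
  show D y ∈ _
  rw [hy]
  exact add_mem (Submodule.smul_mem _ _
    (Submodule.mem_sup_right (Submodule.mem_span_singleton_self _)))
    (Submodule.mem_sup_left hfM)

/-- The subalgebra of locally finite elements. -/
def LFalg (D : Derivation K R R) : Subalgebra K R where
  carrier := {f | HasLF D f}
  mul_mem' := HasLF.mul
  add_mem' := HasLF.add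
  algebraMap_mem' := HasLF.algebraMap D

theorem HasLF.span_pow_le {D : Derivation K R R} {f : R} (hf : HasLF D f) :
    ∃ M : Submodule K R, M.FG ∧
      Submodule.span K (Set.range fun i : ℕ => (D.toLinearMap ^ i) f) ≤ M := by
  obtain ⟨M, hM, hMfg, hfM⟩ := hf
  refine ⟨M, hMfg, Submodule.span_le.2 ?_⟩
  rintro _ ⟨i, rfl⟩
  induction i with
  | zero => simpa using hfM
  | succ i ih =>
      show (D.toLinearMap ^ (i + 1)) f ∈ M
      rw [pow_succ']
      exact hM ⟨_, ih, rfl⟩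

end Aux

/-- A triangular derivation `D = ∂x + Σⱼ (aⱼ yⱼ + bⱼ(x, y₁,…,y_{j-1})) ∂yⱼ` with all
`aⱼ ∈ K` constants is locally finite. -/
theorem stmt11 {K : Type*} [Field K] [CharZero K] (n : ℕ)
    (a : Fin n → K) (b : Fin n → MvPolynomial (Option (Fin n)) K)
    (hb : ∀ j : Fin n, ∀ v ∈ (b j).vars, v = none ∨ ∃ i : Fin n, v = some i ∧ i < j)
    (D : Derivation K (MvPolynomial (Option (Fin n)) K) (MvPolynomial (Option (Fin n)) K))
    (hDx : D (MvPolynomial.X none) = 1)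
    (hDy : ∀ j : Fin n, D (MvPolynomial.X (some j)) =
      MvPolynomial.C (a j) * MvPolynomial.X (some j) + b j) :
    ∀ f : MvPolynomial (Option (Fin n)) K,
      FiniteDimensional K
        ↥(Submodule.span K (Set.range fun i : ℕ => (D.toLinearMap ^ i) f)) := by
  classical
  have hx : HasLF D (MvPolynomial.X none) := by
    refine HasLF.extend (0 : K) (HasLF.one D) ?_
    rw [hDx, zero_smul, zero_add]
  -- strong induction on j
  have key : ∀ m : ℕ, ∀ j : Fin n, (j : ℕ) < m → HasLF D (MvPolynomial.X (some j)) := by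
    intro m
    induction m with
    | zero => intro j hj; omega
    | succ m ih =>
        intro j hj
        have hbS : HasLF D (b j) := by
          have hsub : (b j) ∈ MvPolynomial.supported K
              ({none} ∪ (fun i : Fin n => some i) '' {i | i < j}) := by
            rw [MvPolynomial.mem_supported]
            intro v hv
            rcases hb j v hv with h | ⟨i, rfl, hi⟩
            · exact Or.inl h
            · exact Or.inr ⟨i, hi, rfl⟩
          have hle : MvPolynomial.supported K
              ({none} ∪ (fun i : Fin n => some i) '' {i | i < j}) ≤ LFalg D := by
            rw [MvPolynomial.supported_eq_adjoin_X]
            refine Algebra.adjoin_le ?_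
            rintro _ ⟨v, hv, rfl⟩
            rcases hv with h | ⟨i, hi, rfl⟩
            · rw [Set.mem_singleton_iff] at h; rw [h]; exact hx
            · have hi' : (i : ℕ) < (j : ℕ) := hi
              exact ih i (by omega)
          exact hle hsub
        refine HasLF.extend (a j) hbS ?_
        rw [hDy j, MvPolynomial.smul_eq_C_mul]
  have hX : ∀ v : Option (Fin n), HasLF D (MvPolynomial.X v) := by
    rintro (_ | j)
    · exact hx
    · exact key n j j.isLt
  have hall : ∀ f : MvPolynomial (Option (Fin n)) K, HasLF D f := by
    intro f
    have : f ∈ LFalg D := by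
      have : (⊤ : Subalgebra K (MvPolynomial (Option (Fin n)) K)) ≤ LFalg D := by
        rw [← MvPolynomial.adjoin_range_X]
        refine Algebra.adjoin_le ?_
        rintro _ ⟨v, rfl⟩
        exact hX v
      exact this trivial
    exact this
  intro f
  obtain ⟨M, hMfg, hle⟩ := (hall f).span_pow_le
  haveI : FiniteDimensional K M := Module.Finite.iff_fg.2 hMfg
  exact Submodule.finiteDimensional_of_le hle
end

section
/- Let K be a field of characteristic zero and let D = ∂_x + Σⱼ₌₁ⁿ (aⱼ(x)yⱼ + bⱼ(x, y₁, …, y_{j-1})) ∂_{yⱼ} be a derivation of K[x, y₁, …, y_n]. If deg a_{i₀}(x) ≥ 1 for some i₀, then D is not locally finite; specifically, the K-span of {Dⁱ(y_{i₀}) : i ≥ 1} is infinite-dimensional. -/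
open Polynomial MvPolynomial

section Aux

variable {K : Type*} [Field K]

/-- A finite-dimensional submodule of `K[X]` is contained in some `degreeLT`. -/
lemma aux_fd_degree_bound (W : Submodule K (Polynomial K)) (hW : FiniteDimensional K W) :
    ∃ N : ℕ, W ≤ Polynomial.degreeLT K N := by
  have hfg : W.FG := Module.Finite.iff_fg.mp hW
  obtain ⟨s, hs⟩ := hfg
  refine ⟨s.sup (fun q => q.natDegree) + 1, ?_⟩
  rw [← hs, Submodule.span_le]
  intro p hp
  rw [SetLike.mem_coe, Polynomial.mem_degreeLT]
  have h1 : p.natDegree < s.sup (fun q => q.natDegree) + 1 :=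
    Nat.lt_succ_of_le (Finset.le_sup hp)
  calc p.degree ≤ (p.natDegree : WithBot ℕ) := Polynomial.degree_le_natDegree
    _ < ((s.sup (fun q => q.natDegree) + 1 : ℕ) : WithBot ℕ) := by exact_mod_cast h1

end Aux

/-- For the triangular derivation `D = ∂x + Σⱼ (aⱼ(x) yⱼ + bⱼ(x, y₁,…,y_{j-1})) ∂yⱼ`,
if `deg a_{i₀} ≥ 1` then the span of `{Dⁱ(y_{i₀}) : i ≥ 1}` is infinite-dimensional;
in particular `D` is not locally finite. -/
theorem stmt12 {K : Type*} [Field K] [CharZero K] (n : ℕ)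
    (a : Fin n → Polynomial K) (b : Fin n → MvPolynomial (Option (Fin n)) K)
    (hb : ∀ j : Fin n, ∀ v ∈ (b j).vars, v = none ∨ ∃ i : Fin n, v = some i ∧ i < j)
    (D : Derivation K (MvPolynomial (Option (Fin n)) K) (MvPolynomial (Option (Fin n)) K))
    (hDx : D (MvPolynomial.X none) = 1)
    (hDy : ∀ j : Fin n, D (MvPolynomial.X (some j)) =
      Polynomial.aeval (MvPolynomial.X (none : Option (Fin n))) (a j) * MvPolynomial.X (some j)
        + b j)
    (i₀ : Fin n) (ha : 1 ≤ (a i₀).natDegree) :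
    ¬ FiniteDimensional K
        ↥(Submodule.span K
          (Set.range fun i : ℕ => (D.toLinearMap ^ (i + 1)) (MvPolynomial.X (some i₀)))) := by
  intro hFD
  classical
  set d := (a i₀).natDegree with hd
  -- the set of "small" variables
  set S : Set (Option (Fin n)) := insert none (some '' Set.Iio i₀) with hS
  have hbS : ∀ j : Fin n, j ≤ i₀ → b j ∈ MvPolynomial.supported K S := by
    intro j hj
    rw [MvPolynomial.mem_supported]
    intro v hv
    rcases hb j v hv with h | ⟨i, rfl, hij⟩
    · exact h ▸ Set.mem_insert _ _
    · exact Set.mem_insert_iff.mpr (Or.inr ⟨i, lt_of_lt_of_le hij hj, rfl⟩)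
  have hXnone : (MvPolynomial.X none : MvPolynomial (Option (Fin n)) K) ∈ MvPolynomial.supported K S := by
    rw [MvPolynomial.mem_supported]
    intro v hv
    simp only [MvPolynomial.vars_X, Finset.coe_singleton, Set.mem_singleton_iff] at hv
    exact hv ▸ Set.mem_insert _ _
  have haev : ∀ p : Polynomial K,
      Polynomial.aeval (MvPolynomial.X (none : Option (Fin n)) : MvPolynomial (Option (Fin n)) K) p
        ∈ MvPolynomial.supported K S := by
    intro p
    induction p using Polynomial.induction_on' with
    | add p q hp hq => rw [map_add]; exact add_mem hp hq
    | monomial m k =>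
        rw [Polynomial.aeval_monomial]
        exact mul_mem (Subalgebra.algebraMap_mem _ _) (pow_mem hXnone _)
  -- D preserves the subalgebra of polynomials supported on S
  have hDS : ∀ p ∈ MvPolynomial.supported K S, D p ∈ MvPolynomial.supported K S := by
    intro p hp
    rw [MvPolynomial.supported_eq_adjoin_X] at hp ⊢
    induction hp using Algebra.adjoin_induction with
    | mem x hx =>
        obtain ⟨v, hv, rfl⟩ := hx
        rcases Set.mem_insert_iff.mp hv with rfl | ⟨j, hj, rfl⟩
        · rw [hDx]; exact one_mem _
        · rw [hDy j]
          refine add_mem (mul_mem ?_ (Algebra.subset_adjoin ⟨some j, hv, rfl⟩)) ?_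
          · have := haev (a j)
            rwa [MvPolynomial.supported_eq_adjoin_X] at this
          · have := hbS j (le_of_lt hj)
            rwa [MvPolynomial.supported_eq_adjoin_X] at this
    | algebraMap r => rw [Derivation.map_algebraMap]; exact zero_mem _
    | add x y hx hy ihx ihy => rw [map_add]; exact add_mem ihx ihy
    | mul x y hx hy ihx ihy =>
        rw [Derivation.leibniz, smul_eq_mul, smul_eq_mul]
        exact add_mem (mul_mem hx ihy) (mul_mem hy ihx)
  -- the coefficient sequence
  let c : ℕ → Polynomial K := fun k =>
    Nat.rec 1 (fun _ ck => a i₀ * ck + Polynomial.derivative ck) k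
  have hc0 : c 0 = 1 := rfl
  have hcs : ∀ k, c (k + 1) = a i₀ * c k + Polynomial.derivative (c k) := fun _ => rfl
  have ha0 : a i₀ ≠ 0 := by
    intro h
    rw [hd, h, Polynomial.natDegree_zero] at ha
    omega
  have hcdeg : ∀ k, c k ≠ 0 ∧ (c k).natDegree = k * d := by
    intro k
    induction k with
    | zero => exact ⟨by rw [hc0]; exact one_ne_zero, by rw [hc0]; simp⟩
    | succ k ih =>
        obtain ⟨hne, hdeg⟩ := ih
        have hmul : (a i₀ * c k).natDegree = d + k * d := by
          rw [Polynomial.natDegree_mul ha0 hne, hdeg]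
        have hder : (Polynomial.derivative (c k)).natDegree < (a i₀ * c k).natDegree := by
          rw [hmul]
          have h1 : (Polynomial.derivative (c k)).natDegree ≤ (c k).natDegree - 1 :=
            Polynomial.natDegree_derivative_le _
        -- `(c k).natDegree - 1 = k*d - 1 < d + k*d` since `d ≥ 1`
          rw [hdeg] at h1
          omega
        have hdeg' : (c (k + 1)).natDegree = (k + 1) * d := by
          rw [hcs k, Polynomial.natDegree_add_eq_left_of_natDegree_lt hder, hmul]
          ring
        refine ⟨?_, hdeg'⟩
        intro h0
        rw [h0, Polynomial.natDegree_zero] at hdeg'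
        have : 1 ≤ (k + 1) * d := Nat.one_le_iff_ne_zero.mpr (by positivity)
        omega
  -- main induction: D^k y = aeval (c k) * y + r with r supported on S
  have main : ∀ k : ℕ, ∃ r ∈ MvPolynomial.supported K S,
      (D.toLinearMap ^ k) (MvPolynomial.X (some i₀)) =
        Polynomial.aeval (MvPolynomial.X (none : Option (Fin n)) : MvPolynomial (Option (Fin n)) K) (c k)
          * MvPolynomial.X (some i₀) + r := by
    intro k
    induction k with
    | zero =>
        refine ⟨0, zero_mem _, ?_⟩
        simp [hc0]
    | succ k ih =>
        obtain ⟨r, hrS, hr⟩ := ih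
        refine ⟨Polynomial.aeval (MvPolynomial.X (none : Option (Fin n)) : MvPolynomial (Option (Fin n)) K) (c k) * b i₀
          + D r, add_mem (mul_mem (haev _) (hbS i₀ le_rfl)) (hDS r hrS), ?_⟩
        have : (D.toLinearMap ^ (k + 1)) (MvPolynomial.X (some i₀)) =
            D ((D.toLinearMap ^ k) (MvPolynomial.X (some i₀))) := by
          rw [pow_succ']; rfl
        rw [this, hr, map_add, Derivation.leibniz, Derivation.map_aeval, hDx, hDy i₀, hcs k]
        simp only [smul_eq_mul, map_add, map_mul]
        ring
  -- the extraction linear map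
  let g : Option (Fin n) → Polynomial (Polynomial K) := fun v =>
    Option.elim v (Polynomial.C Polynomial.X) (fun j => if j = i₀ then Polynomial.X else 0)
  let π : MvPolynomial (Option (Fin n)) K →ₐ[K] Polynomial (Polynomial K) := MvPolynomial.aeval g
  let φ : MvPolynomial (Option (Fin n)) K →ₗ[K] Polynomial K :=
    ((Polynomial.lcoeff (Polynomial K) 1).restrictScalars K) ∘ₗ π.toLinearMap
  have hπr : ∀ r ∈ MvPolynomial.supported K S, ∃ s : Polynomial K, π r = Polynomial.C s := by
    intro r hr
    have h1 : π r ∈ (MvPolynomial.supported K S).map π := Subalgebra.mem_map.mpr ⟨r, hr, rfl⟩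
    rw [MvPolynomial.supported_eq_adjoin_X, AlgHom.map_adjoin] at h1
    have h2 : Algebra.adjoin K (π '' (MvPolynomial.X '' S)) ≤
        (Polynomial.CAlgHom (R := K) (A := Polynomial K)).range := by
      rw [Algebra.adjoin_le_iff]
      rintro _ ⟨_, ⟨v, hv, rfl⟩, rfl⟩
      rcases Set.mem_insert_iff.mp hv with rfl | ⟨j, hj, rfl⟩
      · refine ⟨Polynomial.X, ?_⟩
        simp [π, g, Polynomial.CAlgHom]
      · refine ⟨0, ?_⟩
        have : π (MvPolynomial.X (some j)) = 0 := by
          simp only [π, MvPolynomial.aeval_X, g, Option.elim]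
          rw [if_neg (ne_of_lt hj)]
        simp [this]
    obtain ⟨s, hs⟩ := h2 h1
    exact ⟨s, hs.symm⟩
  have hφ : ∀ k, φ ((D.toLinearMap ^ k) (MvPolynomial.X (some i₀))) = c k := by
    intro k
    obtain ⟨r, hrS, hr⟩ := main k
    obtain ⟨s, hs⟩ := hπr r hrS
    have hπaev : π (Polynomial.aeval (MvPolynomial.X (none : Option (Fin n)) : MvPolynomial (Option (Fin n)) K) (c k)) =
        Polynomial.C (c k) := by
      rw [← Polynomial.aeval_algHom_apply π (MvPolynomial.X none) (c k)]
      have hg : π (MvPolynomial.X (none : Option (Fin n))) = Polynomial.C Polynomial.X := by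
        simp [π, g]
      rw [hg]
      have := Polynomial.aeval_algHom_apply
        (Polynomial.CAlgHom (R := K) (A := Polynomial K)) Polynomial.X (c k)
      simp only [Polynomial.CAlgHom, AlgHom.coe_mk, RingHom.coe_mk, MonoidHom.coe_mk,
        OneHom.coe_mk] at this
      rw [this, Polynomial.aeval_X_left_apply]
    have hπy : π (MvPolynomial.X (some i₀)) = Polynomial.X := by
      simp [π, g]
    simp only [φ, LinearMap.coe_comp, Function.comp_apply, LinearMap.coe_restrictScalars,
      AlgHom.toLinearMap_apply, hr, map_add, map_mul, hπaev, hπy, hs, Polynomial.lcoeff_apply]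
    simp [Polynomial.coeff_C]
  -- conclude
  set M := Submodule.span K
    (Set.range fun i : ℕ => (D.toLinearMap ^ (i + 1)) (MvPolynomial.X (some i₀))) with hM
  have hFDmap : FiniteDimensional K (M.map φ) := by infer_instance
  obtain ⟨N, hN⟩ := aux_fd_degree_bound (M.map φ) hFDmap
  -- `c (N + 1)` belongs to `M.map φ` but has degree `(N+1) * d ≥ N + 1 > N`
  have hmem : c (N + 1) ∈ M.map φ := by
    refine ⟨(D.toLinearMap ^ (N + 1)) (MvPolynomial.X (some i₀)), ?_, hφ (N + 1)⟩
    exact Submodule.subset_span ⟨N, rfl⟩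
  have hlt := Polynomial.mem_degreeLT.mp (hN hmem)
  obtain ⟨hne, hdeg⟩ := hcdeg (N + 1)
  rw [Polynomial.degree_eq_natDegree hne, hdeg] at hlt
  have : (N + 1) * d < N := by exact_mod_cast hlt
  nlinarith
end

section
/- Let K be a field of characteristic zero and let D = ∂_x + Σⱼ₌₁ⁿ (aⱼ(x)yⱼ + bⱼ(x)) ∂_{yⱼ} be a derivation of R = K[x, y₁, …, y_n]. Assume the equation Σⱼ γⱼ aⱼ(x) = 0 has no nonzero solution (γ₁, …, γₙ) ∈ ℕⁿ, and deg a₁(x) ≥ 1. Then y₁ ∉ D(R), i.e., there is no f ∈ R with D(f) = y₁. -/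
open Polynomial MvPolynomial

private lemma aux_ne_zero {K : Type*} [Field K] [CharZero K] {s c : Polynomial K}
    (hs : s ≠ 0) (hc : c ≠ 0) : Polynomial.derivative c + s * c ≠ 0 := by
  intro h
  have h1 : s * c = -Polynomial.derivative c := by linear_combination h
  by_cases hd : Polynomial.derivative c = 0
  · rw [hd, neg_zero] at h1
    exact mul_ne_zero hs hc h1
  · have hcnd : c.natDegree ≠ 0 := by
      intro h0
      rw [Polynomial.eq_C_of_natDegree_eq_zero h0] at hd
      simp at hd
    have hmul : (s * c).natDegree = s.natDegree + c.natDegree :=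
      Polynomial.natDegree_mul hs hc
    have hlt := Polynomial.natDegree_derivative_lt hcnd
    rw [h1, Polynomial.natDegree_neg] at hmul
    omega

private lemma aux_ne_one {K : Type*} [Field K] [CharZero K] {s c : Polynomial K}
    (hs : 1 ≤ s.natDegree) : Polynomial.derivative c + s * c ≠ 1 := by
  intro h
  have hs0 : s ≠ 0 := by intro h0; rw [h0] at hs; simp at hs
  by_cases hc : c = 0
  · rw [hc] at h; simp at h
  · have hmul : (s * c).natDegree = s.natDegree + c.natDegree :=
      Polynomial.natDegree_mul hs0 hc
    have h1 : s * c = 1 - Polynomial.derivative c := by linear_combination h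
    have h2 : (1 - Polynomial.derivative c).natDegree ≤
        max (1 : Polynomial K).natDegree (Polynomial.derivative c).natDegree :=
      Polynomial.natDegree_sub_le _ _
    have h3 : (Polynomial.derivative c).natDegree ≤ c.natDegree - 1 :=
      Polynomial.natDegree_derivative_le c
    rw [← h1, hmul, Polynomial.natDegree_one] at h2
    by_cases hcd : c.natDegree = 0
    · have : Polynomial.derivative c = 0 := by
        rw [Polynomial.eq_C_of_natDegree_eq_zero hcd]; simp
      rw [this] at h2; simp at h2; omega
    · have h4 : max 0 (Polynomial.derivative c).natDegree ≤ c.natDegree - 1 := by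
        simp [h3]
      omega

private lemma e_aeval {K : Type*} [CommSemiring K] (n : ℕ) (q : Polynomial K) :
    optionEquivRight K (Fin n) (Polynomial.aeval (X (none : Option (Fin n))) q)
      = MvPolynomial.C q := by
  have h : ((optionEquivRight K (Fin n)).toAlgHom.comp
      (Polynomial.aeval (X (none : Option (Fin n)))))
      = IsScalarTower.toAlgHom K (Polynomial K) (MvPolynomial (Fin n) (Polynomial K)) := by
    apply Polynomial.algHom_ext
    simp [optionEquivRight_X_none]
  have h2 := DFunLike.congr_fun h q
  simpa [MvPolynomial.algebraMap_eq] using h2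

private lemma key_coeff {K : Type*} [CommRing K] (n : ℕ)
    (a b : Fin n → Polynomial K)
    (D : Derivation K (MvPolynomial (Option (Fin n)) K) (MvPolynomial (Option (Fin n)) K))
    (hDx : D (X none) = 1)
    (hDy : ∀ j : Fin n, D (X (some j)) =
      Polynomial.aeval (X (none : Option (Fin n))) (a j) * X (some j)
        + Polynomial.aeval (X (none : Option (Fin n))) (b j))
    (p : MvPolynomial (Option (Fin n)) K) (γ : Fin n →₀ ℕ) :
    coeff γ (optionEquivRight K (Fin n) (D p)) =
      Polynomial.derivative (coeff γ (optionEquivRight K (Fin n) p))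
      + (∑ j : Fin n, (γ j : Polynomial K) * a j) * coeff γ (optionEquivRight K (Fin n) p)
      + ∑ j : Fin n, ((γ j : Polynomial K) + 1) * b j
          * coeff (γ + Finsupp.single j 1) (optionEquivRight K (Fin n) p) := by
  classical
  induction p using MvPolynomial.induction_on generalizing γ with
  | C r =>
    have hD : D (MvPolynomial.C r : MvPolynomial (Option (Fin n)) K) = 0 := by
      rw [← MvPolynomial.algebraMap_eq]; exact D.map_algebraMap r
    rw [hD, map_zero, MvPolynomial.coeff_zero _, optionEquivRight_C]
    have hz : ∀ j : Fin n, coeff (γ + Finsupp.single j 1)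
        (MvPolynomial.C (Polynomial.C r) : MvPolynomial (Fin n) (Polynomial K)) = 0 := by
      intro j
      rw [MvPolynomial.coeff_C, if_neg]
      intro h
      have := DFunLike.congr_fun h j
      simp at this
    simp only [hz, mul_zero, Finset.sum_const_zero, add_zero]
    rcases eq_or_ne γ 0 with h0 | h0
    · subst h0; simp [MvPolynomial.coeff_C]
    · rw [MvPolynomial.coeff_C, if_neg (by exact fun h => h0 h.symm)]
      simp
  | add p q hp hq =>
    simp only [map_add, MvPolynomial.coeff_add, Polynomial.derivative_add, hp γ, hq γ, mul_add,
      Finset.sum_add_distrib]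
    ring
  | mul_X p i hp =>
    match i with
    | none =>
      have hDq : D (p * X none) = p + X none * D p := by
        rw [D.leibniz, hDx]; simp only [smul_eq_mul, mul_one]
      have hmul : optionEquivRight K (Fin n) (p * X none)
          = MvPolynomial.C Polynomial.X * optionEquivRight K (Fin n) p := by
        rw [map_mul, optionEquivRight_X_none, mul_comm]
      rw [hDq, map_add, map_mul, optionEquivRight_X_none]
      simp only [hmul, MvPolynomial.coeff_add, MvPolynomial.coeff_C_mul]
      rw [hp γ]
      rw [show (∑ j : Fin n, ((γ j : Polynomial K) + 1) * b j *
            (Polynomial.X * MvPolynomial.coeff (γ + Finsupp.single j 1)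
              (optionEquivRight K (Fin n) p)))
          = Polynomial.X * ∑ j : Fin n, ((γ j : Polynomial K) + 1) * b j *
            MvPolynomial.coeff (γ + Finsupp.single j 1) (optionEquivRight K (Fin n) p) by
          rw [Finset.mul_sum]; exact Finset.sum_congr rfl fun j _ => by ring]
      rw [Polynomial.derivative_mul, Polynomial.derivative_X]
      ring
    | some i =>
      have hDq : D (p * X (some i)) =
          (Polynomial.aeval (X (none : Option (Fin n))) (a i) * p) * X (some i)
          + Polynomial.aeval (X (none : Option (Fin n))) (b i) * p
          + D p * X (some i) := by
        rw [D.leibniz, hDy i]; simp only [smul_eq_mul]; ring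
      have hre : optionEquivRight K (Fin n) (p * X (some i))
          = optionEquivRight K (Fin n) p * MvPolynomial.X i := by
        rw [map_mul, optionEquivRight_X_some]
      rw [hDq]
      simp only [map_add, map_mul, optionEquivRight_X_some, e_aeval, hre,
        MvPolynomial.coeff_add, MvPolynomial.coeff_C_mul, MvPolynomial.coeff_mul_X']
      by_cases hi : γ i = 0
      · have hns : i ∉ γ.support := by simp [Finsupp.mem_support_iff, hi]
        have hsum : (∑ j : Fin n, ((γ j : Polynomial K) + 1) * b j *
              (if i ∈ (γ + Finsupp.single j 1).support
               then MvPolynomial.coeff (γ + Finsupp.single j 1 - Finsupp.single i 1)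
                 (optionEquivRight K (Fin n) p) else 0))
            = b i * MvPolynomial.coeff γ (optionEquivRight K (Fin n) p) := by
          rw [Finset.sum_eq_single_of_mem i (Finset.mem_univ i)]
          · rw [if_pos, add_tsub_cancel_right, hi]
            · norm_num
            · rw [Finsupp.mem_support_iff, Finsupp.add_apply, Finsupp.single_apply, if_pos rfl]
              omega
          · intro j _ hj
            rw [if_neg, mul_zero]
            rw [Finsupp.mem_support_iff, Finsupp.add_apply, Finsupp.single_apply,
              if_neg hj]
            omega
        rw [hsum]
        simp only [if_neg hns]
        simp
      · have hle : Finsupp.single i 1 ≤ γ :=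
          Finsupp.single_le_iff.mpr (Nat.one_le_iff_ne_zero.mpr hi)
        obtain ⟨δ, rfl⟩ : ∃ δ, γ = δ + Finsupp.single i 1 :=
          ⟨γ - Finsupp.single i 1, (tsub_add_cancel_of_le hle).symm⟩
        have hmem : i ∈ (δ + Finsupp.single i 1).support := Finsupp.mem_support_iff.mpr hi
        have hmem2 : ∀ j : Fin n, i ∈ (δ + Finsupp.single i 1 + Finsupp.single j 1).support := by
          intro j
          rw [Finsupp.mem_support_iff] at hmem ⊢
          rw [Finsupp.add_apply]
          omega
        have hsub : δ + Finsupp.single i 1 - Finsupp.single i 1 = δ :=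
          add_tsub_cancel_right _ _
        have hsub2 : ∀ j : Fin n, δ + Finsupp.single i 1 + Finsupp.single j 1
            - Finsupp.single i 1 = δ + Finsupp.single j 1 := by
          intro j
          rw [add_right_comm, add_tsub_cancel_right]
        simp only [if_pos hmem, if_pos (hmem2 _), hsub, hsub2]
        rw [hp δ]
        have hcast : ∀ j : Fin n, (((δ + Finsupp.single i 1 : Fin n →₀ ℕ)) j : Polynomial K)
            = ((δ j : ℕ) : Polynomial K) + ((Finsupp.single i 1 j : ℕ) : Polynomial K) := by
          intro j
          rw [Finsupp.add_apply, Nat.cast_add]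
        have hsingle : ∀ (t : Fin n → Polynomial K),
            (∑ j : Fin n, ((Finsupp.single i 1 j : ℕ) : Polynomial K) * t j) = t i := by
          intro t
          rw [Finset.sum_eq_single_of_mem i (Finset.mem_univ i)]
          · simp
          · intro j _ hj
            rw [Finsupp.single_apply, if_neg (Ne.symm hj)]
            simp
        have hS1 : (∑ j : Fin n, (((δ + Finsupp.single i 1 : Fin n →₀ ℕ)) j : Polynomial K) * a j)
            = (∑ j : Fin n, ((δ j : ℕ) : Polynomial K) * a j) + a i := by
          rw [Finset.sum_congr rfl (fun j _ => by rw [hcast j, add_mul]),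
            Finset.sum_add_distrib, hsingle a]
        have hS2 : (∑ j : Fin n, ((((δ + Finsupp.single i 1 : Fin n →₀ ℕ)) j : Polynomial K) + 1) * b j *
              MvPolynomial.coeff (δ + Finsupp.single j 1) (optionEquivRight K (Fin n) p))
            = (∑ j : Fin n, (((δ j : ℕ) : Polynomial K) + 1) * b j *
              MvPolynomial.coeff (δ + Finsupp.single j 1) (optionEquivRight K (Fin n) p))
              + b i * MvPolynomial.coeff (δ + Finsupp.single i 1)
                  (optionEquivRight K (Fin n) p) := by
          have hterm : ∀ j : Fin n, ((((δ + Finsupp.single i 1 : Fin n →₀ ℕ)) j : Polynomial K) + 1) * b j *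
              MvPolynomial.coeff (δ + Finsupp.single j 1) (optionEquivRight K (Fin n) p)
              = (((δ j : ℕ) : Polynomial K) + 1) * b j *
                MvPolynomial.coeff (δ + Finsupp.single j 1) (optionEquivRight K (Fin n) p)
              + ((Finsupp.single i 1 j : ℕ) : Polynomial K) *
                (b j * MvPolynomial.coeff (δ + Finsupp.single j 1)
                  (optionEquivRight K (Fin n) p)) := by
            intro j; rw [hcast j]; ring
          rw [Finset.sum_congr rfl (fun j _ => hterm j), Finset.sum_add_distrib,
            hsingle (fun j => b j * MvPolynomial.coeff (δ + Finsupp.single j 1)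
              (optionEquivRight K (Fin n) p))]
        rw [hS1, hS2]
        ring

/-- If `Σⱼ γⱼ aⱼ(x) = 0` has no nonzero solution `γ ∈ ℕⁿ` and `deg a₁ ≥ 1`, then
`y₁ ∉ Im D` for `D = ∂x + Σⱼ (aⱼ(x)yⱼ + bⱼ(x)) ∂yⱼ`. -/
theorem stmt13 {K : Type*} [Field K] [CharZero K] (n : ℕ) (hn : 0 < n)
    (a b : Fin n → Polynomial K)
    (D : Derivation K (MvPolynomial (Option (Fin n)) K) (MvPolynomial (Option (Fin n)) K))
    (hDx : D (MvPolynomial.X none) = 1)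
    (hDy : ∀ j : Fin n, D (MvPolynomial.X (some j)) =
      Polynomial.aeval (MvPolynomial.X (none : Option (Fin n))) (a j) * MvPolynomial.X (some j)
        + Polynomial.aeval (MvPolynomial.X (none : Option (Fin n))) (b j))
    (hγ : ∀ γ : Fin n → ℕ, (∑ j : Fin n, (γ j : Polynomial K) * a j) = 0 → γ = 0)
    (ha : 1 ≤ (a ⟨0, hn⟩).natDegree) :
    ¬ ∃ f : MvPolynomial (Option (Fin n)) K, D f = MvPolynomial.X (some ⟨0, hn⟩) := by
  classical
  rintro ⟨f, hf⟩
  set j₀ : Fin n := ⟨0, hn⟩ with hj₀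
  have key := fun γ => key_coeff n a b D hDx hDy f γ
  rw [hf] at key
  simp only [optionEquivRight_X_some, MvPolynomial.coeff_X'] at key
  -- key : ∀ γ, (if single j₀ 1 = γ then 1 else 0) = derivative c + s*c + Σ ...
  set F := optionEquivRight K (Fin n) f with hFdef
  have hsum_single : ∀ (j : Fin n) (γ : Fin n →₀ ℕ),
      ∑ i ∈ (γ + Finsupp.single j 1).support, ((γ + Finsupp.single j 1 : Fin n →₀ ℕ)) i
        = (∑ i ∈ γ.support, γ i) + 1 := by
    intro j γ
    have h1 : ∀ δ : Fin n →₀ ℕ, (∑ i ∈ δ.support, δ i) = δ.sum (fun _ e => e) := fun _ => rfl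
    rw [h1, h1, Finsupp.sum_add_index' (fun _ => rfl) (fun _ _ _ => rfl),
      Finsupp.sum_single_index rfl]
  by_cases hT : F.totalDegree ≤ 1
  · have h1 := key (Finsupp.single j₀ 1)
    have hz : ∀ j : Fin n, MvPolynomial.coeff (Finsupp.single j₀ 1 + Finsupp.single j 1) F = 0 := by
      intro j
      apply coeff_eq_zero_of_totalDegree_lt
      rw [hsum_single]
      have : (∑ i ∈ (Finsupp.single j₀ 1).support, Finsupp.single j₀ 1 i) = 1 := by
        simp [Finsupp.support_single_ne_zero _ (one_ne_zero)]
      omega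
    rw [if_pos rfl] at h1
    simp only [hz, mul_zero, Finset.sum_const_zero, add_zero] at h1
    have hs : (∑ j : Fin n, ((Finsupp.single j₀ 1 : Fin n →₀ ℕ) j : Polynomial K) * a j)
        = a j₀ := by
      rw [Finset.sum_eq_single_of_mem j₀ (Finset.mem_univ j₀)]
      · simp
      · intro j _ hj
        rw [Finsupp.single_apply, if_neg (Ne.symm hj)]
        simp
    rw [hs] at h1
    exact aux_ne_one ha h1.symm
  · push_neg at hT
    have hF0 : F ≠ 0 := by
      intro h0
      rw [h0, totalDegree_zero] at hT
      omega
    obtain ⟨γ, hγmem, hγdeg⟩ :=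
      Finset.exists_mem_eq_sup F.support (support_nonempty.mpr hF0)
        (fun s => s.sum fun _ e => e)
    have hγdeg' : (∑ i ∈ γ.support, γ i) = F.totalDegree := by
      rw [totalDegree, hγdeg]; rfl
    have h1 := key γ
    have hz : ∀ j : Fin n, MvPolynomial.coeff (γ + Finsupp.single j 1) F = 0 := by
      intro j
      apply coeff_eq_zero_of_totalDegree_lt
      rw [hsum_single, hγdeg']
      omega
    rw [if_neg] at h1
    · simp only [hz, mul_zero, Finset.sum_const_zero, add_zero] at h1
      have hc : MvPolynomial.coeff γ F ≠ 0 := mem_support_iff.mp hγmem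
      have hs : (∑ j : Fin n, (γ j : Polynomial K) * a j) ≠ 0 := by
        intro h0
        have := hγ (fun j => γ j) h0
        have hγ0 : γ = 0 := by
          ext j
          exact congrFun this j
        rw [hγ0] at hγdeg'
        simp at hγdeg'
        omega
      exact aux_ne_zero hs hc h1.symm
    · intro h
      have : (∑ i ∈ γ.support, γ i) = 1 := by
        rw [← h]
        simp [Finsupp.support_single_ne_zero _ (one_ne_zero)]
      omega
end

section
/- Let K be a field of characteristic zero and let D = ∂_x + Σⱼ₌₁ⁿ (aⱼ(x)yⱼ + bⱼ(x)) ∂_{yⱼ} be a derivation of R = K[x, y₁, …, y_n]. If the equation Σⱼ γⱼ aⱼ(x) = 0 has no nonzero solution in ℕⁿ and some a_{i₀} has deg a_{i₀} ≥ 1, then Im D is not a Mathieu-Zhao subspace of R. -/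
/-- A `K`-subspace `M` of a commutative `K`-algebra is a Mathieu-Zhao subspace if whenever
`u^m ∈ M` for all `m ≥ 1`, one has `v·u^m ∈ M` for all sufficiently large `m`. -/
def IsMathieuZhao {K R : Type*} [Field K] [CommRing R] [Algebra K R]
    (M : Submodule K R) : Prop :=
  ∀ u v : R, (∀ m : ℕ, 1 ≤ m → u ^ m ∈ M) → ∃ N : ℕ, ∀ m : ℕ, N ≤ m → v * u ^ m ∈ M

open Polynomial MvPolynomial

lemma aux_degree_deriv_add_mul {K : Type*} [Field K] (f g : Polynomial K)
    (hf : f ≠ 0) (hg : g ≠ 0) :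
    (Polynomial.derivative f + g * f).degree = (g * f).degree := by
  rcases eq_or_ne (Polynomial.derivative f) 0 with h | h
  · rw [h, zero_add]
  · apply Polynomial.degree_add_eq_right_of_degree_lt
    calc (Polynomial.derivative f).degree < f.degree := Polynomial.degree_derivative_lt hf
      _ ≤ (g * f).degree := by
          rw [Polynomial.degree_mul]
          exact le_add_of_nonneg_left (Polynomial.zero_le_degree_iff.2 hg)

lemma aux_coeff_formula {K : Type*} [CommRing K] (n : ℕ) (a b : Fin n → Polynomial K)
    (D' : MvPolynomial (Fin n) (Polynomial K) → MvPolynomial (Fin n) (Polynomial K))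
    (hadd : ∀ p q, D' (p + q) = D' p + D' q)
    (hC : ∀ p, D' (MvPolynomial.C p) = MvPolynomial.C (Polynomial.derivative p))
    (hX : ∀ j, D' (MvPolynomial.X j) =
      MvPolynomial.C (a j) * MvPolynomial.X j + MvPolynomial.C (b j))
    (hmul : ∀ p q, D' (p * q) = D' p * q + p * D' q)
    (p : MvPolynomial (Fin n) (Polynomial K)) (γ : Fin n →₀ ℕ) :
    MvPolynomial.coeff γ (D' p) =
      Polynomial.derivative (MvPolynomial.coeff γ p)
      + (∑ j, (γ j : Polynomial K) * a j) * MvPolynomial.coeff γ p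
      + ∑ j, ((γ j : Polynomial K) + 1) *
          (b j * MvPolynomial.coeff (γ + Finsupp.single j 1) p) := by
  induction p using MvPolynomial.induction_on generalizing γ with
  | C q =>
    rcases eq_or_ne γ 0 with rfl | hγ0
    · have h1 : ∀ j : Fin n, ¬ ((0 : Fin n →₀ ℕ) = Finsupp.single j 1) := by
        intro j h; have := DFunLike.congr_fun h j; simp at this
      simp [hC, MvPolynomial.coeff_C, h1]
    · have hγ0' : ¬ ((0 : Fin n →₀ ℕ) = γ) := fun h => hγ0 h.symm
      have h2 : ∀ j : Fin n, ¬ ((0 : Fin n →₀ ℕ) = γ + Finsupp.single j 1) := by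
        intro j h; have := DFunLike.congr_fun h j; simp at this
      simp [hC, MvPolynomial.coeff_C, hγ0', h2]
  | add p q ihp ihq =>
    simp only [hadd, MvPolynomial.coeff_add, ihp, ihq, Polynomial.derivative_add,
      mul_add, Finset.sum_add_distrib]
    ring
  | mul_X p i ih =>
    rw [hmul, hX]
    have key : D' p * MvPolynomial.X i + p * (MvPolynomial.C (a i) * MvPolynomial.X i
        + MvPolynomial.C (b i))
        = D' p * MvPolynomial.X i + (MvPolynomial.C (a i) * p) * MvPolynomial.X i
          + MvPolynomial.C (b i) * p := by ring
    rw [key, MvPolynomial.coeff_add, MvPolynomial.coeff_add,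
      MvPolynomial.coeff_mul_X' γ i (D' p),
      MvPolynomial.coeff_mul_X' γ i (MvPolynomial.C (a i) * p),
      MvPolynomial.coeff_C_mul, MvPolynomial.coeff_mul_X' γ i p,
      MvPolynomial.coeff_C_mul]
    rcases eq_or_ne (γ i) 0 with hγi | hγi
    · have hnot : i ∉ γ.support := by simp [Finsupp.mem_support_iff, hγi]
      have hmemj : ∀ j : Fin n, i ∈ (γ + Finsupp.single j 1).support ↔ j = i := by
        intro j
        simp only [Finsupp.mem_support_iff, Finsupp.add_apply, Finsupp.single_apply]
        rcases eq_or_ne j i with rfl | hj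
        · simp [hγi]
        · simp [hγi, hj]
      have hsub : (γ + Finsupp.single i 1) - Finsupp.single i 1 = γ := by
        ext k; simp [Finsupp.single_apply]
      rw [if_neg hnot, if_neg hnot, if_neg hnot]
      have hsum : ∀ j : Fin n, ((γ j : Polynomial K) + 1) *
          (b j * MvPolynomial.coeff (γ + Finsupp.single j 1) (p * MvPolynomial.X i))
          = if j = i then b i * MvPolynomial.coeff γ p else 0 := by
        intro j
        rw [MvPolynomial.coeff_mul_X']
        rcases eq_or_ne j i with rfl | hj
        · rw [if_pos ((hmemj j).2 rfl), if_pos rfl, hsub, hγi]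
          push_cast; ring
        · rw [if_neg (fun h => hj ((hmemj j).1 h)), if_neg hj]
          ring
      rw [Finset.sum_congr rfl (fun j _ => hsum j), Finset.sum_ite_eq' Finset.univ i
        (fun _ => b i * MvPolynomial.coeff γ p)]
      simp
    · -- γ i ≥ 1 : write γ = γ' + single i 1
      obtain ⟨γ', rfl⟩ : ∃ γ', γ = γ' + Finsupp.single i 1 := by
        refine ⟨γ - Finsupp.single i 1, ?_⟩
        ext k
        simp only [Finsupp.add_apply, Finsupp.tsub_apply, Finsupp.single_apply]
        split_ifs with h
        · subst h; omega
        · omega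
      have hsub : ∀ δ : Fin n →₀ ℕ, (δ + Finsupp.single i 1) - Finsupp.single i 1 = δ := by
        intro δ; ext k; simp [Finsupp.single_apply]
      have hmem : i ∈ ((γ' + Finsupp.single i 1 : Fin n →₀ ℕ)).support := by
        simp [Finsupp.mem_support_iff, Finsupp.add_apply, Finsupp.single_apply]
      have hcoord : ∀ j, (((γ' + Finsupp.single i 1 : Fin n →₀ ℕ) j : ℕ) : Polynomial K)
          = (γ' j : Polynomial K) + if i = j then 1 else 0 := by
        intro j
        rcases eq_or_ne i j with rfl | hj
        · simp
        · simp [hj, Finsupp.single_apply]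
      rw [if_pos hmem, if_pos hmem, hsub, ih γ']
      have hrw : ∀ j : Fin n, ((((γ' + Finsupp.single i 1 : Fin n →₀ ℕ) j : ℕ) : Polynomial K) + 1) *
          (b j * MvPolynomial.coeff ((γ' + Finsupp.single i 1) + Finsupp.single j 1)
            (p * MvPolynomial.X i))
          = ((γ' j : Polynomial K) + 1) *
              (b j * MvPolynomial.coeff (γ' + Finsupp.single j 1) p)
            + (if i = j then
                b i * MvPolynomial.coeff (γ' + Finsupp.single i 1) p
              else 0) := by
        intro j
        have hcomm : (γ' + Finsupp.single i 1) + Finsupp.single j 1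
            = (γ' + Finsupp.single j 1) + Finsupp.single i 1 := by
          rw [add_right_comm]
        rw [hcomm, MvPolynomial.coeff_mul_X', if_pos, hsub, hcoord j]
        · rcases eq_or_ne i j with rfl | hj
          · rw [if_pos rfl, if_pos rfl]; ring
          · rw [if_neg hj, if_neg hj]; ring
        · simp [Finsupp.mem_support_iff, Finsupp.add_apply, Finsupp.single_apply]
      rw [Finset.sum_congr rfl (fun j _ => hrw j), Finset.sum_add_distrib,
        Finset.sum_ite_eq Finset.univ i
          (fun _ => b i * MvPolynomial.coeff (γ' + Finsupp.single i 1) p)]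
      have hsuma : (∑ j, (((γ' + Finsupp.single i 1 : Fin n →₀ ℕ) j : ℕ) : Polynomial K) * a j)
          = (∑ j, (γ' j : Polynomial K) * a j) + a i := by
        rw [Finset.sum_congr rfl (fun j _ => by rw [hcoord j])]
        simp only [add_mul, ite_mul, one_mul, zero_mul, Finset.sum_add_distrib,
          Finset.sum_ite_eq Finset.univ i (fun j => a j)]
        simp
      rw [hsuma]
      simp only [if_pos hmem, Finset.mem_univ, if_true]
      ring

/-- If `Σⱼ γⱼ aⱼ(x) = 0` has no nonzero solution in `ℕⁿ` and some `deg a_{i₀} ≥ 1`, then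
`Im D` is not a Mathieu-Zhao subspace, where `D = ∂x + Σⱼ (aⱼ(x)yⱼ + bⱼ(x)) ∂yⱼ`. -/
theorem stmt14 {K : Type*} [Field K] [CharZero K] (n : ℕ)
    (a b : Fin n → Polynomial K)
    (D : Derivation K (MvPolynomial (Option (Fin n)) K) (MvPolynomial (Option (Fin n)) K))
    (hDx : D (MvPolynomial.X none) = 1)
    (hDy : ∀ j : Fin n, D (MvPolynomial.X (some j)) =
      Polynomial.aeval (MvPolynomial.X (none : Option (Fin n))) (a j) * MvPolynomial.X (some j)
        + Polynomial.aeval (MvPolynomial.X (none : Option (Fin n))) (b j))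
    (hγ : ∀ γ : Fin n → ℕ, (∑ j : Fin n, (γ j : Polynomial K) * a j) = 0 → γ = 0)
    (i₀ : Fin n) (ha : 1 ≤ (a i₀).natDegree) :
    ¬ IsMathieuZhao (LinearMap.range D.toLinearMap) := by
  classical
  intro H
  have h1 : (1 : MvPolynomial (Option (Fin n)) K) ∈ LinearMap.range D.toLinearMap :=
    ⟨MvPolynomial.X none, hDx⟩
  obtain ⟨N, hN⟩ := H 1 (MvPolynomial.X (some i₀)) (fun m _ => by rw [one_pow]; exact h1)
  have hy : MvPolynomial.X (some i₀) ∈ LinearMap.range D.toLinearMap := by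
    have := hN (N + 1) (Nat.le_succ _)
    simpa using this
  obtain ⟨f, hf⟩ := hy
  replace hf : D f = MvPolynomial.X (some i₀) := hf
  set e := MvPolynomial.optionEquivRight K (Fin n) with he
  set D' : MvPolynomial (Fin n) (Polynomial K) → MvPolynomial (Fin n) (Polynomial K) :=
    fun q => e (D (e.symm q)) with hD'
  have haeval : ∀ q : Polynomial K,
      e (Polynomial.aeval (MvPolynomial.X (none : Option (Fin n))) q) = MvPolynomial.C q := by
    intro q
    have h : (e.toAlgHom.comp
          (Polynomial.aeval (MvPolynomial.X (none : Option (Fin n)))) :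
          Polynomial K →ₐ[K] MvPolynomial (Fin n) (Polynomial K))
        = IsScalarTower.toAlgHom K (Polynomial K) (MvPolynomial (Fin n) (Polynomial K)) := by
      apply Polynomial.algHom_ext
      simp [he, MvPolynomial.optionEquivRight_X_none, MvPolynomial.algebraMap_eq]
    have := AlgHom.congr_fun h q
    simpa [MvPolynomial.algebraMap_eq] using this
  have hsymmC : ∀ q : Polynomial K, e.symm (MvPolynomial.C q)
      = Polynomial.aeval (MvPolynomial.X (none : Option (Fin n))) q := by
    intro q; rw [← haeval q, AlgEquiv.symm_apply_apply]
  have hsymmX : ∀ j : Fin n, e.symm (MvPolynomial.X j) = MvPolynomial.X (some j) := by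
    intro j
    rw [he, ← MvPolynomial.optionEquivRight_X_some K (Fin n) j, AlgEquiv.symm_apply_apply]
  have hD'C : ∀ q, D' (MvPolynomial.C q) = MvPolynomial.C (Polynomial.derivative q) := by
    intro q
    show e (D (e.symm (MvPolynomial.C q))) = _
    rw [hsymmC, Derivation.comp_aeval_eq, hDx, smul_eq_mul, mul_one, haeval]
  have hD'X : ∀ j, D' (MvPolynomial.X j)
      = MvPolynomial.C (a j) * MvPolynomial.X j + MvPolynomial.C (b j) := by
    intro j
    show e (D (e.symm (MvPolynomial.X j))) = _
    rw [hsymmX, hDy j, map_add, map_mul, haeval, haeval, he,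
      MvPolynomial.optionEquivRight_X_some]
  have hadd' : ∀ p q, D' (p + q) = D' p + D' q := by
    intro p q
    show e (D (e.symm (p + q))) = e (D (e.symm p)) + e (D (e.symm q))
    rw [map_add, map_add, map_add]
  have hmul' : ∀ p q, D' (p * q) = D' p * q + p * D' q := by
    intro p q
    show e (D (e.symm (p * q))) = e (D (e.symm p)) * q + p * e (D (e.symm q))
    rw [map_mul, Derivation.leibniz, smul_eq_mul, smul_eq_mul, map_add, map_mul, map_mul,
      AlgEquiv.apply_symm_apply, AlgEquiv.apply_symm_apply]
    ring
  set p := e f with hpdef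
  have hDp : D' p = MvPolynomial.X i₀ := by
    show e (D (e.symm (e f))) = _
    rw [AlgEquiv.symm_apply_apply, hf, he, MvPolynomial.optionEquivRight_X_some]
  have formula := fun γ => aux_coeff_formula n a b D' hadd' hD'C hD'X hmul' p γ
  rcases eq_or_ne p.totalDegree 0 with hd | hd
  · -- all coefficients at nonzero exponents vanish; evaluate at `single i₀ 1`
    have hzero : ∀ γ : Fin n →₀ ℕ, γ ≠ 0 → MvPolynomial.coeff γ p = 0 := by
      intro γ hγ0
      apply MvPolynomial.coeff_eq_zero_of_totalDegree_lt
      rw [hd]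
      obtain ⟨j, hj⟩ : ∃ j, γ j ≠ 0 := by
        by_contra hall
        push_neg at hall
        exact hγ0 (by ext j; exact hall j)
      have hjmem : j ∈ γ.support := Finsupp.mem_support_iff.2 hj
      calc 0 < γ j := Nat.pos_of_ne_zero hj
        _ ≤ ∑ i ∈ γ.support, γ i := Finset.single_le_sum (fun _ _ => Nat.zero_le _) hjmem
    have h10 : ∀ j : Fin n, (Finsupp.single i₀ 1 + Finsupp.single j 1 : Fin n →₀ ℕ) ≠ 0 := by
      intro j h
      have := DFunLike.congr_fun h j
      simp [Finsupp.single_apply] at this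
    have hs : (Finsupp.single i₀ 1 : Fin n →₀ ℕ) ≠ 0 := by
      intro h
      have := DFunLike.congr_fun h i₀
      simp at this
    have hkey := formula (Finsupp.single i₀ 1)
    rw [hDp, MvPolynomial.coeff_X, hzero _ hs] at hkey
    have h3 : ∀ j : Fin n,
        MvPolynomial.coeff (Finsupp.single i₀ 1 + Finsupp.single j 1) p = 0 :=
      fun j => hzero _ (h10 j)
    simp [h3] at hkey
  · -- a top-degree monomial
    have hp0 : p ≠ 0 := by
      intro h
      rw [h] at hd
      simp at hd
    obtain ⟨γ, hγmem, hγdeg⟩ := Finset.exists_mem_eq_sup p.support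
      (MvPolynomial.support_nonempty.mpr hp0) (fun s => s.sum fun _ m => m)
    have hγdeg' : p.totalDegree = γ.sum fun _ m => m := hγdeg
    have hcγ : MvPolynomial.coeff γ p ≠ 0 := MvPolynomial.mem_support_iff.1 hγmem
    have hγne0 : γ ≠ 0 := by
      intro h
      rw [h] at hγdeg'
      simp [Finsupp.sum] at hγdeg'
      exact hd hγdeg'
    have hhigh : ∀ j : Fin n, MvPolynomial.coeff (γ + Finsupp.single j 1) p = 0 := by
      intro j
      apply MvPolynomial.coeff_eq_zero_of_totalDegree_lt
      have hsum : (∑ i ∈ (γ + Finsupp.single j 1 : Fin n →₀ ℕ).support, (γ + Finsupp.single j 1 : Fin n →₀ ℕ) i)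
          = ((γ + Finsupp.single j 1 : Fin n →₀ ℕ).sum fun _ m => m) := rfl
      rw [hsum, Finsupp.sum_add_index' (fun _ => rfl) (fun _ _ _ => rfl),
        Finsupp.sum_single_index rfl, hγdeg']
      omega
    have hgne : (∑ j, (γ j : Polynomial K) * a j) ≠ 0 := by
      intro h
      have := hγ (fun j => γ j) h
      apply hγne0
      ext j
      exact congrFun this j
    have E := formula γ
    rw [hDp, MvPolynomial.coeff_X'] at E
    simp only [hhigh, mul_zero, Finset.sum_const_zero, add_zero] at E
    have hdeg := aux_degree_deriv_add_mul (MvPolynomial.coeff γ p)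
      (∑ j, (γ j : Polynomial K) * a j) hcγ hgne
    by_cases hcase : Finsupp.single i₀ 1 = γ
    · rw [if_pos hcase] at E
      have hgval : (∑ j, (γ j : Polynomial K) * a j) = a i₀ := by
        rw [← hcase]
        simp [Finsupp.single_apply, apply_ite, ite_mul, Finset.sum_ite_eq]
      rw [hgval] at E hdeg
      have h0 : (a i₀ * MvPolynomial.coeff γ p).degree = 0 := by
        rw [← hdeg, ← E, Polynomial.degree_one]
      have ha0 : a i₀ ≠ 0 := by
        intro h; rw [h] at ha; simp at ha
      have hnat : (a i₀).natDegree + (MvPolynomial.coeff γ p).natDegree = 0 := by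
        have := Polynomial.natDegree_eq_of_degree_eq_some h0
        rwa [Polynomial.natDegree_mul ha0 hcγ] at this
      omega
    · rw [if_neg hcase] at E
      rw [← E, Polynomial.degree_zero] at hdeg
      exact mul_ne_zero hgne hcγ (Polynomial.degree_eq_bot.1 hdeg.symm)
end

section
/- Let K be a field of characteristic zero and let D = ∂_x + Σⱼ₌₁ʳ (a(x)yⱼ + bⱼ(x)) ∂_{yⱼ} be a derivation of R = K[x, y₁, …, y_r]. Then Im D is a Mathieu-Zhao subspace of R if and only if a(x) ∈ K (a constant). -/
open MvPolynomial
noncomputable section MZAux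
set_option linter.unusedSectionVars false
variable {K : Type*} [Field K] [CharZero K] {r : ℕ}

lemma aeval_X_none_expand (p : Polynomial K) :
    (Polynomial.aeval (X (none : Option (Fin r))) p : MvPolynomial (Option (Fin r)) K)
      = ∑ m ∈ p.support, monomial (Finsupp.single none m) (p.coeff m) := by
  rw [Polynomial.aeval_def, Polynomial.eval₂_eq_sum, Polynomial.sum]
  refine Finset.sum_congr rfl fun m _ => ?_
  rw [X_pow_eq_monomial, algebraMap_eq, C_mul_monomial, mul_one]

lemma coeff_aeval_mul (p : Polynomial K) (h : MvPolynomial (Option (Fin r)) K)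
    (τ : Option (Fin r) →₀ ℕ) :
    coeff τ (Polynomial.aeval (X (none : Option (Fin r))) p * h)
      = ∑ m ∈ p.support, if Finsupp.single (none : Option (Fin r)) m ≤ τ then
          p.coeff m * coeff (τ - Finsupp.single none m) h else 0 := by
  rw [aeval_X_none_expand, Finset.sum_mul, coeff_sum]
  exact Finset.sum_congr rfl fun m _ => coeff_monomial_mul' _ _ _ _

def ydeg (σ : Option (Fin r) →₀ ℕ) : ℕ := ∑ j : Fin r, σ (some j)

lemma coeff_pderiv (i : Option (Fin r)) (f : MvPolynomial (Option (Fin r)) K)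
    (τ : Option (Fin r) →₀ ℕ) :
    coeff τ (pderiv i f) = (τ i + 1 : ℕ) * coeff (τ + Finsupp.single i 1) f := by
  induction f using MvPolynomial.induction_on' with
  | monomial s c =>
    rw [pderiv_monomial, coeff_monomial, coeff_monomial]
    by_cases h : s = τ + Finsupp.single i 1
    · subst h
      have h1 : τ + Finsupp.single i 1 - Finsupp.single i 1 = τ := by simp
      rw [if_pos h1]
      have h2 : ((τ + Finsupp.single i 1 : Option (Fin r) →₀ ℕ)) i = τ i + 1 := by simp
      rw [if_pos rfl, h2]
      push_cast; ring
    · rw [if_neg h, mul_zero]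
      by_cases h2 : s - Finsupp.single i 1 = τ
      · have hsi : s i = 0 := by
          by_contra hsi
          apply h
          rw [← h2, tsub_add_cancel_of_le]
          rwa [Finsupp.single_le_iff, Nat.one_le_iff_ne_zero]
        rw [if_pos h2, hsi]; simp
      · rw [if_neg h2]
  | add p q hp hq => simp [hp, hq, mul_add]

lemma coeff_X_pderiv (j : Fin r) (f : MvPolynomial (Option (Fin r)) K)
    (τ : Option (Fin r) →₀ ℕ) :
    coeff τ (X (some j) * pderiv (some j) f) = (τ (some j) : K) * coeff τ f := by
  classical
  rw [coeff_X_mul']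
  by_cases h : some j ∈ τ.support
  · rw [if_pos h, _root_.coeff_pderiv]
    have h1 : τ - Finsupp.single (some j) 1 + Finsupp.single (some j) 1 = τ := by
      rw [tsub_add_cancel_of_le]
      rw [Finsupp.single_le_iff, Nat.one_le_iff_ne_zero]
      exact Finsupp.mem_support_iff.mp h
    have h2 : ((τ - Finsupp.single (some j) 1 : Option (Fin r) →₀ ℕ)) (some j) + 1 = τ (some j) := by
      rw [Finsupp.tsub_apply, Finsupp.single_apply, if_pos rfl]
      have := Nat.one_le_iff_ne_zero.mpr (Finsupp.mem_support_iff.mp h)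
      omega
    rw [h1, ← h2]
  · rw [if_neg h]
    have : τ (some j) = 0 := Finsupp.notMem_support_iff.mp h
    rw [this]; simp
abbrev Rr (K : Type*) [Field K] (r : ℕ) := MvPolynomial (Option (Fin r)) K

lemma Dformula (a : Polynomial K) (b : Fin r → Polynomial K)
    (D : Derivation K (Rr K r) (Rr K r))
    (hDx : D (X none) = 1)
    (hDy : ∀ j : Fin r, D (X (some j)) =
      Polynomial.aeval (X (none : Option (Fin r))) a * X (some j)
        + Polynomial.aeval (X (none : Option (Fin r))) (b j)) (f : Rr K r) :
    D f = pderiv none f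
      + ∑ j : Fin r, (Polynomial.aeval (X (none : Option (Fin r))) a * X (some j)
          + Polynomial.aeval (X (none : Option (Fin r))) (b j)) * pderiv (some j) f := by
  have key : ∀ i : Option (Fin r),
      D (X i) = pderiv none (X i)
        + ∑ j : Fin r, (Polynomial.aeval (X (none : Option (Fin r))) a * X (some j)
            + Polynomial.aeval (X (none : Option (Fin r))) (b j)) * pderiv (some j) (X i) := by
    intro i
    match i with
    | none => simp [hDx]
    | some j =>
      rw [hDy j]
      rw [pderiv_X_of_ne (by simp)]
      rw [Finset.sum_eq_single j]
      · simp
      · intro j' _ hj'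
        rw [pderiv_X_of_ne (by simpa using hj'.symm ∘ Option.some.inj), mul_zero]
      · simp
  induction f using MvPolynomial.induction_on with
  | C c => simp
  | add p q hp hq =>
    simp only [map_add, hp, hq, mul_add]
    rw [Finset.sum_add_distrib]; ring
  | mul_X p i hp =>
    rw [D.leibniz, hp, key i, smul_eq_mul, smul_eq_mul, pderiv_mul]
    have hsum : ∑ j : Fin r,
        ((Polynomial.aeval (X (none : Option (Fin r)))) a * X (some j)
          + (Polynomial.aeval (X (none : Option (Fin r)))) (b j)) * pderiv (some j) (p * X i)
        = (∑ j : Fin r, ((Polynomial.aeval (X (none : Option (Fin r)))) a * X (some j)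
            + (Polynomial.aeval (X (none : Option (Fin r)))) (b j)) * pderiv (some j) p) * X i
          + p * ∑ j : Fin r, ((Polynomial.aeval (X (none : Option (Fin r)))) a * X (some j)
            + (Polynomial.aeval (X (none : Option (Fin r)))) (b j)) * pderiv (some j) (X i) := by
      rw [Finset.sum_mul, Finset.mul_sum, ← Finset.sum_add_distrib]
      exact Finset.sum_congr rfl fun j _ => by rw [pderiv_mul]; ring
    rw [hsum]; ring

lemma tsub_none_apply_some (τ : Option (Fin r) →₀ ℕ) (m : ℕ) (j : Fin r) :
    ((τ - Finsupp.single (none : Option (Fin r)) m : Option (Fin r) →₀ ℕ)) (some j)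
      = τ (some j) := by
  rw [Finsupp.tsub_apply, Finsupp.single_apply, if_neg (by simp)]
  rfl

lemma coeff_D (a : Polynomial K) (b : Fin r → Polynomial K)
    (D : Derivation K (Rr K r) (Rr K r))
    (hDx : D (X none) = 1)
    (hDy : ∀ j : Fin r, D (X (some j)) =
      Polynomial.aeval (X (none : Option (Fin r))) a * X (some j)
        + Polynomial.aeval (X (none : Option (Fin r))) (b j)) (f : Rr K r)
    (τ : Option (Fin r) →₀ ℕ) :
    coeff τ (D f)
      = ((τ none + 1 : ℕ) : K) * coeff (τ + Finsupp.single none 1) f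
      + ∑ j : Fin r, ∑ m ∈ a.support,
          (if Finsupp.single (none : Option (Fin r)) m ≤ τ then
            a.coeff m * ((τ (some j) : K) * coeff (τ - Finsupp.single none m) f) else 0)
      + ∑ j : Fin r, ∑ m ∈ (b j).support,
          (if Finsupp.single (none : Option (Fin r)) m ≤ τ then
            (b j).coeff m * ((((τ - Finsupp.single none m : Option (Fin r) →₀ ℕ)) (some j) + 1 : ℕ)
              * coeff (τ - Finsupp.single none m + Finsupp.single (some j) 1) f) else 0) := by
  rw [Dformula a b D hDx hDy f]
  rw [coeff_add, _root_.coeff_pderiv, coeff_sum, add_assoc]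
  congr 1
  have point : ∀ j : Fin r,
      coeff τ ((Polynomial.aeval (X (none : Option (Fin r))) a * X (some j)
          + Polynomial.aeval (X (none : Option (Fin r))) (b j)) * pderiv (some j) f)
      = (∑ m ∈ a.support,
          (if Finsupp.single (none : Option (Fin r)) m ≤ τ then
            a.coeff m * ((τ (some j) : K) * coeff (τ - Finsupp.single none m) f) else 0))
        + ∑ m ∈ (b j).support,
          (if Finsupp.single (none : Option (Fin r)) m ≤ τ then
            (b j).coeff m * ((((τ - Finsupp.single none m : Option (Fin r) →₀ ℕ)) (some j) + 1 : ℕ)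
              * coeff (τ - Finsupp.single none m + Finsupp.single (some j) 1) f) else 0) := by
    intro j
    have expand : (Polynomial.aeval (X (none : Option (Fin r))) a * X (some j)
        + Polynomial.aeval (X (none : Option (Fin r))) (b j)) * pderiv (some j) f
      = Polynomial.aeval (X (none : Option (Fin r))) a * (X (some j) * pderiv (some j) f)
        + Polynomial.aeval (X (none : Option (Fin r))) (b j) * pderiv (some j) f := by ring
    rw [expand, coeff_add, coeff_aeval_mul, coeff_aeval_mul]
    congr 1
    · refine Finset.sum_congr rfl fun m _ => ?_
      split_ifs with h
      · rw [coeff_X_pderiv, tsub_none_apply_some]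
      · rfl
    · refine Finset.sum_congr rfl fun m _ => ?_
      split_ifs with h
      · rw [_root_.coeff_pderiv]
      · rfl
  rw [Finset.sum_congr rfl fun j _ => point j, Finset.sum_add_distrib]

lemma ydeg_add' (σ τ : Option (Fin r) →₀ ℕ) : ydeg (σ + τ) = ydeg σ + ydeg τ := by
  simp [ydeg, Finset.sum_add_distrib]

lemma ydeg_single_none (n : ℕ) : ydeg (Finsupp.single (none : Option (Fin r)) n) = 0 := by
  simp [ydeg, Finsupp.single_apply]

lemma ydeg_single_some (j : Fin r) (n : ℕ) : ydeg (Finsupp.single (some j : Option (Fin r)) n) = n := by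
  simp [ydeg, Finsupp.single_apply]

lemma ydeg_tsub_none (τ : Option (Fin r) →₀ ℕ) (m : ℕ) :
    ydeg (τ - Finsupp.single (none : Option (Fin r)) m) = ydeg τ := by
  unfold ydeg
  exact Finset.sum_congr rfl fun j _ => by rw [tsub_none_apply_some]

lemma X_not_mem_range (a : Polynomial K) (b : Fin r → Polynomial K)
    (D : Derivation K (Rr K r) (Rr K r))
    (hDx : D (X none) = 1)
    (hDy : ∀ j : Fin r, D (X (some j)) =
      Polynomial.aeval (X (none : Option (Fin r))) a * X (some j)
        + Polynomial.aeval (X (none : Option (Fin r))) (b j))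
    (hk : a.natDegree ≠ 0) (j₀ : Fin r) (f : Rr K r)
    (hf : D f = X (some j₀)) : False := by
  classical
  set k := a.natDegree with hkdef
  have ha0 : a ≠ 0 := fun h => hk (by rw [hkdef, h, Polynomial.natDegree_zero])
  have hak : a.coeff k ≠ 0 := by
    rw [hkdef, ← Polynomial.leadingCoeff]
    exact Polynomial.leadingCoeff_ne_zero.mpr ha0
  set d := f.support.sup ydeg with hd
  have hbig : ∀ ρ : Option (Fin r) →₀ ℕ, d < ydeg ρ → coeff ρ f = 0 := by
    intro ρ h
    by_contra hc
    exact absurd (Finset.le_sup (f := ydeg) (mem_support_iff.mpr hc)) (by omega)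
  by_cases hd0 : d = 0
  · -- low-degree case
    set τ : Option (Fin r) →₀ ℕ := Finsupp.single (some j₀) 1 with hτ
    have hydτ : ydeg τ = 1 := ydeg_single_some _ _
    have h1 : coeff τ (D f) = 0 := by
      rw [coeff_D a b D hDx hDy f τ]
      have t0 : coeff (τ + Finsupp.single none 1) f = 0 :=
        hbig _ (by rw [ydeg_add', hydτ, ydeg_single_none]; omega)
      rw [t0]
      have t1 : ∀ j : Fin r, ∀ m ∈ a.support,
          (if Finsupp.single (none : Option (Fin r)) m ≤ τ then
            a.coeff m * ((τ (some j) : K) * coeff (τ - Finsupp.single none m) f) else 0) = 0 := by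
        intro j m _
        split_ifs with h
        · rw [hbig _ (by rw [ydeg_tsub_none, hydτ]; omega)]; ring
        · rfl
      have t2 : ∀ j : Fin r, ∀ m ∈ (b j).support,
          (if Finsupp.single (none : Option (Fin r)) m ≤ τ then
            (b j).coeff m * ((((τ - Finsupp.single none m : Option (Fin r) →₀ ℕ)) (some j) + 1 : ℕ)
              * coeff (τ - Finsupp.single none m + Finsupp.single (some j) 1) f) else 0) = 0 := by
        intro j m _
        split_ifs with h
        · rw [hbig _ (by rw [ydeg_add', ydeg_tsub_none, hydτ, ydeg_single_some]; omega)]; ring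
        · rfl
      rw [Finset.sum_eq_zero fun j (_ : j ∈ Finset.univ) => Finset.sum_eq_zero (t1 j),
        Finset.sum_eq_zero fun j (_ : j ∈ Finset.univ) => Finset.sum_eq_zero (t2 j)]
      ring
    rw [hf] at h1
    rw [coeff_X'] at h1
    rw [if_pos rfl] at h1
    exact one_ne_zero h1
  · -- main case
    have hS : f.support.Nonempty := by
      rcases Finset.eq_empty_or_nonempty f.support with h | h
      · exact absurd (by rw [hd, h, Finset.sup_empty]; rfl) hd0
      · exact h
    set T := f.support.filter (fun s => ydeg s = d) with hT
    have hTne : T.Nonempty := by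
      obtain ⟨σ0, hσ0, hs⟩ := Finset.exists_mem_eq_sup f.support hS ydeg
      exact ⟨σ0, Finset.mem_filter.mpr ⟨hσ0, hs.symm⟩⟩
    set n := T.sup (fun s => s none) with hn
    obtain ⟨σs, hσs, hσsn⟩ := Finset.exists_mem_eq_sup T hTne (fun s => s none)
    obtain ⟨hσsf, hydσ⟩ := Finset.mem_filter.mp hσs
    have hcf : coeff σs f ≠ 0 := mem_support_iff.mp hσsf
    have hmax : ∀ ρ : Option (Fin r) →₀ ℕ, ydeg ρ = d → n < ρ none → coeff ρ f = 0 := by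
      intro ρ h1 h2
      by_contra hc
      have hmem : ρ ∈ T := Finset.mem_filter.mpr ⟨mem_support_iff.mpr hc, h1⟩
      have hle : ρ none ≤ n := by simpa using Finset.le_sup (f := fun s => s none) hmem
      omega
    set τ : Option (Fin r) →₀ ℕ := σs + Finsupp.single none k with hτ
    have hydτ : ydeg τ = d := by rw [hτ, ydeg_add', ydeg_single_none, hydσ]; omega
    have hτnone : τ none = n + k := by
      rw [hτ]; simp [Finsupp.single_apply, ← hσsn]; exact hn.symm
    have hτsome : ∀ j : Fin r, τ (some j) = σs (some j) := by
      intro j; rw [hτ]; simp [Finsupp.single_apply]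
    have hkey : coeff τ (D f) = (d : K) * (a.coeff k * coeff σs f) := by
      rw [coeff_D a b D hDx hDy f τ]
      have t0 : coeff (τ + Finsupp.single none 1) f = 0 := by
        apply hmax
        · rw [ydeg_add', hydτ, ydeg_single_none]; omega
        · have h1 : ((τ + Finsupp.single none 1 : Option (Fin r) →₀ ℕ)) none = n + k + 1 := by
            rw [Finsupp.add_apply, hτnone, Finsupp.single_apply, if_pos rfl]
          rw [h1]
          omega
      rw [t0]
      have t2 : ∀ j : Fin r, ∀ m ∈ (b j).support,
          (if Finsupp.single (none : Option (Fin r)) m ≤ τ then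
            (b j).coeff m * ((((τ - Finsupp.single none m : Option (Fin r) →₀ ℕ)) (some j) + 1 : ℕ)
              * coeff (τ - Finsupp.single none m + Finsupp.single (some j) 1) f) else 0) = 0 := by
        intro j m _
        split_ifs with h
        · rw [hbig _ (by rw [ydeg_add', ydeg_tsub_none, hydτ, ydeg_single_some]; omega)]; ring
        · rfl
      have t1 : ∀ j : Fin r, (∑ m ∈ a.support,
          (if Finsupp.single (none : Option (Fin r)) m ≤ τ then
            a.coeff m * ((τ (some j) : K) * coeff (τ - Finsupp.single none m) f) else 0))
          = a.coeff k * ((σs (some j) : K) * coeff σs f) := by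
        intro j
        rw [Finset.sum_eq_single k]
        · have hc : Finsupp.single (none : Option (Fin r)) k ≤ τ := by
            rw [Finsupp.single_le_iff, hτnone]; omega
          rw [if_pos hc, hτsome]
          have : τ - Finsupp.single (none : Option (Fin r)) k = σs := by
            rw [hτ, add_tsub_cancel_right]
          rw [this]
        · intro m hm hmk
          have hmlt : m < k := lt_of_le_of_ne (Polynomial.le_natDegree_of_mem_supp m hm) hmk
          have hc : Finsupp.single (none : Option (Fin r)) m ≤ τ := by
            rw [Finsupp.single_le_iff, hτnone]; omega
          rw [if_pos hc]
          have hz : coeff (τ - Finsupp.single (none : Option (Fin r)) m) f = 0 := by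
            apply hmax
            · rw [ydeg_tsub_none, hydτ]
            · rw [Finsupp.tsub_apply, Finsupp.single_apply, if_pos rfl, hτnone]
              omega
          rw [hz]; ring
        · intro hknot
          exact absurd (Polynomial.mem_support_iff.mpr hak) hknot
      rw [Finset.sum_congr rfl fun j _ => t1 j,
        Finset.sum_eq_zero fun j (_ : j ∈ Finset.univ) => Finset.sum_eq_zero (t2 j),
        ← Finset.mul_sum]
      have hsum : ∑ j : Fin r, ((σs (some j) : K) * coeff σs f) = (d : K) * coeff σs f := by
        rw [← Finset.sum_mul]
        congr 1
        rw [← hydσ]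
        simp [ydeg]
      rw [hsum]
      ring
    rw [hf, coeff_X'] at hkey
    have hτne : ¬ (Finsupp.single (some j₀ : Option (Fin r)) 1 = τ) := by
      intro h
      have := congrArg (fun s => s none) h
      simp [Finsupp.single_apply, hτnone] at this
      omega
    rw [if_neg hτne] at hkey
    have : (d : K) ≠ 0 := Nat.cast_ne_zero.mpr hd0
    exact (mul_ne_zero this (mul_ne_zero hak hcf)) hkey.symm

lemma ode_solve (lam : K) (p : Polynomial K) :
    ∃ g : Polynomial K, Polynomial.derivative g + Polynomial.C lam * g = p := by
  by_cases hlam : lam = 0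
  · subst hlam
    induction p using Polynomial.induction_on' with
    | add p q hp hq =>
      obtain ⟨g1, hg1⟩ := hp
      obtain ⟨g2, hg2⟩ := hq
      exact ⟨g1 + g2, by rw [map_add]; linear_combination hg1 + hg2⟩
    | monomial n t =>
      refine ⟨Polynomial.monomial (n + 1) (t / (n + 1)), ?_⟩
      rw [Polynomial.derivative_monomial, map_zero, zero_mul, add_zero]
      simp only [Nat.add_sub_cancel, Nat.cast_add, Nat.cast_one]
      congr 1
      exact div_mul_cancel₀ t (Nat.cast_add_one_ne_zero n)
  · have key : ∀ N : ℕ, ∀ p : Polynomial K, p.natDegree ≤ N →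
        ∃ g : Polynomial K, Polynomial.derivative g + Polynomial.C lam * g = p := by
      intro N
      induction N with
      | zero =>
        intro p hp
        refine ⟨Polynomial.C (p.coeff 0 * lam⁻¹), ?_⟩
        rw [Polynomial.derivative_C, zero_add, ← map_mul]
        rw [Polynomial.eq_C_of_natDegree_eq_zero (Nat.le_zero.mp hp)]
        congr 1
        field_simp
        simp
      | succ N ih =>
        intro p hp
        obtain ⟨h, hh⟩ := ih (-(Polynomial.C lam⁻¹ * Polynomial.derivative p))
          (by
            rw [Polynomial.natDegree_neg]
            refine le_trans (Polynomial.natDegree_C_mul_le _ _) ?_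
            have := Polynomial.natDegree_derivative_le p
            omega)
        refine ⟨Polynomial.C lam⁻¹ * p + h, ?_⟩
        rw [Polynomial.derivative_add, Polynomial.derivative_C_mul]
        have hC : Polynomial.C lam * Polynomial.C lam⁻¹ = 1 := by
          rw [← map_mul, mul_inv_cancel₀ hlam, map_one]
        linear_combination hh + p * hC
    exact key p.natDegree p le_rfl

lemma D_aeval_X_none (D : Derivation K (Rr K r) (Rr K r)) (hDx : D (X none) = 1)
    (g : Polynomial K) :
    D (Polynomial.aeval (X (none : Option (Fin r))) g)
      = Polynomial.aeval (X (none : Option (Fin r))) (Polynomial.derivative g) := by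
  induction g using Polynomial.induction_on' with
  | add p q hp hq =>
    rw [map_add, map_add, hp, hq, Polynomial.derivative_add]
    exact (map_add _ _ _).symm
  | monomial n t =>
    rw [Polynomial.aeval_monomial, Polynomial.derivative_monomial, Polynomial.aeval_monomial]
    simp only [algebraMap_eq]
    rw [C_mul', Derivation.map_smul, Derivation.leibniz_pow, hDx,
      smul_eq_mul, mul_one, nsmul_eq_mul, ← C_eq_coe_nat, ← C_mul', ← mul_assoc, ← map_mul]


lemma D_monomial (c : K) (b : Fin r → Polynomial K)
    (D : Derivation K (Rr K r) (Rr K r))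
    (hDx : D (X none) = 1)
    (hDy : ∀ j : Fin r, D (X (some j)) =
      Polynomial.aeval (X (none : Option (Fin r))) (Polynomial.C c) * X (some j)
        + Polynomial.aeval (X (none : Option (Fin r))) (b j))
    (β : Option (Fin r) →₀ ℕ) (hβ : β none = 0) :
    D (monomial β 1)
      = monomial β ((ydeg β : K) * c)
        + ∑ j : Fin r, Polynomial.aeval (X (none : Option (Fin r))) (b j)
            * monomial (β - Finsupp.single (some j) 1) ((β (some j) : K)) := by
  rw [Dformula (Polynomial.C c) b D hDx hDy]
  have h0 : pderiv (none : Option (Fin r)) (monomial β (1:K)) = 0 := by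
    rw [pderiv_monomial, hβ]
    simp
  rw [h0, zero_add]
  have hC : (Polynomial.aeval (X (none : Option (Fin r)))) (Polynomial.C c)
      = (C c : Rr K r) := by
    rw [Polynomial.aeval_C, algebraMap_eq]
  have hterm : ∀ j : Fin r,
      ((Polynomial.aeval (X (none : Option (Fin r)))) (Polynomial.C c) * X (some j)
        + (Polynomial.aeval (X (none : Option (Fin r)))) (b j)) * pderiv (some j) (monomial β (1:K))
      = C c * monomial β ((β (some j) : K))
        + (Polynomial.aeval (X (none : Option (Fin r)))) (b j)
            * monomial (β - Finsupp.single (some j) 1) ((β (some j) : K)) := by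
    intro j
    rw [pderiv_monomial, hC, one_mul]
    have hXmul : (X (some j) : Rr K r) * monomial (β - Finsupp.single (some j) 1) ((β (some j) : K))
        = monomial β ((β (some j) : K)) := by
      by_cases hj : β (some j) = 0
      · rw [hj]; simp
      · have hexp : Finsupp.single (some j : Option (Fin r)) 1
            + (β - Finsupp.single (some j) 1) = β := by
          ext i
          rw [Finsupp.add_apply, Finsupp.tsub_apply]
          rcases eq_or_ne i (some j) with h | h
          · subst h
            rw [Finsupp.single_apply, if_pos rfl]
            omega
          · rw [Finsupp.single_apply, if_neg (fun e => h e.symm)]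
            omega
        rw [X, monomial_mul, one_mul, hexp]
    rw [add_mul, mul_assoc, hXmul]
  rw [Finset.sum_congr rfl fun j _ => hterm j, Finset.sum_add_distrib]
  congr 1
  rw [← Finset.mul_sum]
  have : ∑ j : Fin r, monomial β ((β (some j) : K)) = monomial β ((ydeg β : K)) := by
    rw [← map_sum]
    congr 1
    rw [ydeg]
    push_cast
    rfl
  rw [this, C_mul_monomial, mul_comm c]

lemma ydeg_sub_lt (β : Option (Fin r) →₀ ℕ) (j : Fin r) (hj : β (some j) ≠ 0) :
    ydeg (β - Finsupp.single (some j) 1) < ydeg β := by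
  unfold ydeg
  apply Finset.sum_lt_sum
  · intro i _
    rw [Finsupp.tsub_apply]
    omega
  · refine ⟨j, Finset.mem_univ j, ?_⟩
    rw [Finsupp.tsub_apply, Finsupp.single_apply, if_pos rfl]
    omega

lemma mem_range_aeval_mono (c : K) (b : Fin r → Polynomial K)
    (D : Derivation K (Rr K r) (Rr K r))
    (hDx : D (X none) = 1)
    (hDy : ∀ j : Fin r, D (X (some j)) =
      Polynomial.aeval (X (none : Option (Fin r))) (Polynomial.C c) * X (some j)
        + Polynomial.aeval (X (none : Option (Fin r))) (b j)) :
    ∀ s : ℕ, ∀ β : Option (Fin r) →₀ ℕ, β none = 0 → ydeg β = s → ∀ g : Polynomial K,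
      Polynomial.aeval (X (none : Option (Fin r))) g * monomial β 1
        ∈ LinearMap.range D.toLinearMap := by
  intro s
  induction s using Nat.strong_induction_on with
  | _ s ih =>
  intro β hβ0 hβd g
  obtain ⟨h, hh⟩ := ode_solve ((s : K) * c) g
  have hF : D (Polynomial.aeval (X (none : Option (Fin r))) h * monomial β 1)
      = Polynomial.aeval (X (none : Option (Fin r))) g * monomial β 1
        + ∑ j : Fin r, Polynomial.aeval (X (none : Option (Fin r))) (h * b j)
            * monomial (β - Finsupp.single (some j) 1) ((β (some j) : K)) := by
    rw [D.leibniz, D_aeval_X_none D hDx, D_monomial c b D hDx hDy β hβ0, smul_eq_mul, smul_eq_mul]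
    have hg : (Polynomial.aeval (X (none : Option (Fin r)))) g
        = Polynomial.aeval (X (none : Option (Fin r))) (Polynomial.derivative h)
          + C ((s : K) * c) * Polynomial.aeval (X (none : Option (Fin r))) h := by
      rw [← hh, map_add, map_mul, Polynomial.aeval_C, algebraMap_eq]
    rw [hg, hβd]
    have hsum : ∑ j : Fin r, Polynomial.aeval (X (none : Option (Fin r))) (h * b j)
        * monomial (β - Finsupp.single (some j) 1) ((β (some j) : K))
        = ∑ j : Fin r, Polynomial.aeval (X (none : Option (Fin r))) h
            * (Polynomial.aeval (X (none : Option (Fin r))) (b j)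
              * monomial (β - Finsupp.single (some j) 1) ((β (some j) : K))) := by
      refine Finset.sum_congr rfl fun j _ => ?_
      rw [map_mul, mul_assoc]
    rw [hsum, mul_add, Finset.mul_sum]
    have hmono2 : (monomial β) ((s : K) * c) = C ((s : K) * c) * monomial β 1 := by
      rw [C_mul_monomial, mul_one]
    rw [hmono2]
    ring
  have hmem : Polynomial.aeval (X (none : Option (Fin r))) g * monomial β 1
      = D (Polynomial.aeval (X (none : Option (Fin r))) h * monomial β 1)
        - ∑ j : Fin r, Polynomial.aeval (X (none : Option (Fin r))) (h * b j)
            * monomial (β - Finsupp.single (some j) 1) ((β (some j) : K)) := by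
    rw [hF]; ring
  rw [hmem]
  refine Submodule.sub_mem _ ⟨_, rfl⟩ (Submodule.sum_mem _ fun j _ => ?_)
  by_cases hj : β (some j) = 0
  · rw [hj]
    simp only [Nat.cast_zero, monomial_zero, mul_zero]
    exact Submodule.zero_mem _
  · have hx := ih (ydeg (β - Finsupp.single (some j) 1))
      (by rw [← hβd]; exact ydeg_sub_lt β j hj)
      (β - Finsupp.single (some j) 1)
      (by simp [Finsupp.tsub_apply, Finsupp.single_apply, hβ0])
      rfl (h * b j)
    have hm : (monomial (β - Finsupp.single (some j) 1)) ((β (some j) : K))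
        = C ((β (some j) : K)) * monomial (β - Finsupp.single (some j) 1) 1 := by
      rw [C_mul_monomial, mul_one]
    rw [hm, mul_left_comm, ← smul_eq_C_mul]
    exact Submodule.smul_mem _ _ hx

lemma D_surjective (c : K) (b : Fin r → Polynomial K)
    (D : Derivation K (Rr K r) (Rr K r))
    (hDx : D (X none) = 1)
    (hDy : ∀ j : Fin r, D (X (some j)) =
      Polynomial.aeval (X (none : Option (Fin r))) (Polynomial.C c) * X (some j)
        + Polynomial.aeval (X (none : Option (Fin r))) (b j)) :
    ∀ p : Rr K r, p ∈ LinearMap.range D.toLinearMap := by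
  intro p
  induction p using MvPolynomial.induction_on' with
  | add p q hp hq => exact Submodule.add_mem _ hp hq
  | monomial σ t =>
    have key : monomial σ t
        = Polynomial.aeval (X (none : Option (Fin r))) (Polynomial.monomial (σ none) t)
          * monomial (σ.erase none) 1 := by
      rw [Polynomial.aeval_monomial, algebraMap_eq, X_pow_eq_monomial, C_mul_monomial,
        monomial_mul, mul_one, mul_one, Finsupp.single_add_erase]
    rw [key]
    exact mem_range_aeval_mono c b D hDx hDy (ydeg (σ.erase none)) (σ.erase none)
      (Finsupp.erase_same) rfl _

end MZAux

/-- For `D = ∂x + Σⱼ (a(x)yⱼ + bⱼ(x)) ∂yⱼ`, `Im D` is a Mathieu-Zhao subspace iff `a ∈ K`. -/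
theorem stmt15 {K : Type*} [Field K] [CharZero K] (r : ℕ) (hr : 0 < r)
    (a : Polynomial K) (b : Fin r → Polynomial K)
    (D : Derivation K (MvPolynomial (Option (Fin r)) K) (MvPolynomial (Option (Fin r)) K))
    (hDx : D (MvPolynomial.X none) = 1)
    (hDy : ∀ j : Fin r, D (MvPolynomial.X (some j)) =
      Polynomial.aeval (MvPolynomial.X (none : Option (Fin r))) a * MvPolynomial.X (some j)
        + Polynomial.aeval (MvPolynomial.X (none : Option (Fin r))) (b j)) :
    IsMathieuZhao (LinearMap.range D.toLinearMap) ↔ ∃ c : K, a = Polynomial.C c := by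
  constructor
  · intro hMZ
    by_contra hne
    have hk : a.natDegree ≠ 0 := by
      intro h
      exact hne ⟨a.coeff 0, Polynomial.eq_C_of_natDegree_eq_zero h⟩
    have h1 : ∀ m : ℕ, 1 ≤ m →
        (1 : MvPolynomial (Option (Fin r)) K) ^ m ∈ LinearMap.range D.toLinearMap := by
      intro m _
      rw [one_pow]
      exact ⟨MvPolynomial.X none, hDx⟩
    obtain ⟨N, hN⟩ := hMZ 1 (MvPolynomial.X (some ⟨0, hr⟩)) h1
    have h2 := hN N le_rfl
    rw [one_pow, mul_one] at h2
    obtain ⟨f, hf⟩ := h2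
    exact X_not_mem_range a b D hDx hDy hk ⟨0, hr⟩ f hf
  · rintro ⟨c, rfl⟩
    intro u v _
    exact ⟨0, fun m _ => D_surjective c b D hDx hDy _⟩
end

section
/- Let K be a field of characteristic zero and D = ∂_x + Σⱼ₌₁ʳ (a·yⱼ + bⱼ(x)) ∂_{yⱼ} a derivation of R = K[x, y₁, …, y_r] with a ∈ K* a nonzero constant and bⱼ ∈ K[x]. Then the isotropy group Aut(R)_D is nontrivial; in particular D is not simple. -/
open Polynomial in
lemma solveODE {K : Type*} [Field K] (a : K) (ha : a ≠ 0) (b : K[X]) :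
    ∃ g : K[X], derivative g = C a * g + b := by
  classical
  set n := b.natDegree
  refine ⟨-∑ k ∈ Finset.range (n+1), (a⁻¹)^(k+1) • (derivative^[k] b), ?_⟩
  have hzero : derivative^[n+1] b = 0 :=
    Polynomial.iterate_derivative_eq_zero (by omega)
  have key : ∑ k ∈ Finset.range (n+1),
      ((a⁻¹)^k • (derivative^[k] b) - (a⁻¹)^(k+1) • (derivative^[k+1] b))
      = (a⁻¹)^0 • (derivative^[0] b) - (a⁻¹)^(n+1) • (derivative^[n+1] b) :=
    Finset.sum_range_sub' (fun k => (a⁻¹)^k • (derivative^[k] b)) (n+1)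
  have hd : derivative (-∑ k ∈ Finset.range (n+1), (a⁻¹)^(k+1) • (derivative^[k] b))
      = -∑ k ∈ Finset.range (n+1), (a⁻¹)^(k+1) • (derivative^[k+1] b) := by
    rw [derivative_neg, derivative_sum]
    congr 1
    refine Finset.sum_congr rfl fun k _ => ?_
    rw [derivative_smul, Function.iterate_succ_apply']
  rw [hd]
  have hc : C a * -∑ k ∈ Finset.range (n+1), (a⁻¹)^(k+1) • (derivative^[k] b)
      = -∑ k ∈ Finset.range (n+1), (a⁻¹)^k • (derivative^[k] b) := by
    rw [mul_neg, Finset.mul_sum]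
    congr 1
    refine Finset.sum_congr rfl fun k _ => ?_
    rw [Polynomial.smul_eq_C_mul, Polynomial.smul_eq_C_mul, ← mul_assoc, ← C_mul]
    congr 2
    field_simp [pow_succ]
    ring_nf; rw [mul_inv_cancel₀ ha, one_mul]
  have := key
  rw [Finset.sum_sub_distrib] at this
  simp only [pow_zero, one_smul, Function.iterate_zero_apply, hzero, smul_zero, sub_zero] at this
  rw [hc]
  linear_combination this

open MvPolynomial in
lemma coeff_aeval_none {K : Type*} [CommSemiring K] {r : ℕ} (j : Fin r) (p : Polynomial K) :
    MvPolynomial.coeff (Finsupp.single (some j) 1)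
      (Polynomial.aeval (X (none : Option (Fin r)) : MvPolynomial (Option (Fin r)) K) p) = 0 := by
  have hne : Finsupp.single (some j) 1 ≠ (0 : (Option (Fin r)) →₀ ℕ) :=
    by simp
  have hne' : ∀ n : ℕ, Finsupp.single (none : Option (Fin r)) n ≠ Finsupp.single (some j) 1 := by
    intro n h
    have := DFunLike.congr_fun h (some j)
    simp at this
  induction p using Polynomial.induction_on with
  | C c => simp [Polynomial.aeval_C, algebraMap_eq, coeff_C, Ne.symm hne]
  | add p q hp hq => simp [hp, hq]
  | monomial n c _ =>
      rw [map_mul, Polynomial.aeval_C, Polynomial.aeval_X_pow, algebraMap_eq,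
        X_pow_eq_monomial, coeff_C_mul, coeff_monomial, if_neg (hne' (n+1)), mul_zero]

open MvPolynomial in
/-- For `D = ∂x + Σⱼ (a·yⱼ + bⱼ(x)) ∂yⱼ` with `a ∈ K*` constant, the isotropy group
`Aut(R)_D` is nontrivial, and `D` is not simple. -/
theorem stmt19 {K : Type*} [Field K] [CharZero K] (r : ℕ) (hr : 0 < r)
    (a : K) (ha : a ≠ 0) (b : Fin r → Polynomial K)
    (D : Derivation K (MvPolynomial (Option (Fin r)) K) (MvPolynomial (Option (Fin r)) K))
    (hDx : D (MvPolynomial.X none) = 1)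
    (hDy : ∀ j : Fin r, D (MvPolynomial.X (some j)) =
      MvPolynomial.C a * MvPolynomial.X (some j) +
        Polynomial.aeval (MvPolynomial.X (none : Option (Fin r))) (b j)) :
    (∃ ρ : MvPolynomial (Option (Fin r)) K ≃ₐ[K] MvPolynomial (Option (Fin r)) K,
        (∀ p, ρ (D p) = D (ρ p)) ∧ ρ ≠ AlgEquiv.refl) ∧
    ∃ I : Ideal (MvPolynomial (Option (Fin r)) K),
      (∀ f ∈ I, D f ∈ I) ∧ I ≠ ⊥ ∧ I ≠ ⊤ := by
  classical
  -- solutions of the ODE g' = a g + b j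
  choose g hg using fun j => solveODE a ha (b j)
  set R := MvPolynomial (Option (Fin r)) K
  set x : R := X (none : Option (Fin r)) with hx
  set G : Fin r → R := fun j => Polynomial.aeval x (g j) with hG
  set B : Fin r → R := fun j => Polynomial.aeval x (b j) with hB
  -- D of G j
  have hDG : ∀ j, D (G j) = C a * G j + B j := by
    intro j
    rw [hG]
    rw [Derivation.map_aeval, hDx, smul_eq_mul, mul_one, hg j, map_add, map_mul,
      Polynomial.aeval_C, algebraMap_eq]
  -- the key eigenvector
  have hkey : ∀ j, D (X (some j) - G j) = C a * (X (some j) - G j) := by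
    intro j
    rw [map_sub, hDy j, hDG j]
    ring
  -- the automorphism
  let f : Option (Fin r) → R := fun i => i.elim x (fun j => 2 * X (some j) - G j)
  let f' : Option (Fin r) → R := fun i => i.elim x (fun j => C (2⁻¹ : K) * (X (some j) + G j))
  let φ : R →ₐ[K] R := aeval f
  let ψ : R →ₐ[K] R := aeval f'
  have hφx : φ x = x := by rw [hx]; show aeval f (X none) = X none; rw [aeval_X]; rfl
  have hψx : ψ x = x := by rw [hx]; show aeval f' (X none) = X none; rw [aeval_X]; rfl
  have hφG : ∀ j, φ (G j) = G j := by
    intro j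
    rw [hG]; rw [← Polynomial.aeval_algHom_apply, hφx]
  have hψG : ∀ j, ψ (G j) = G j := by
    intro j
    rw [hG]; rw [← Polynomial.aeval_algHom_apply, hψx]
  have hφB : ∀ j, φ (B j) = B j := by
    intro j
    rw [hB]; rw [← Polynomial.aeval_algHom_apply, hφx]
  have hC2 : (C (2⁻¹:K) : R) * 2 = 1 := by
    rw [← map_ofNat (C : K →+* R) 2, ← C_mul]
    norm_num
  have hφy : ∀ j, φ (X (some j)) = 2 * X (some j) - G j := by
    intro j; show aeval f (X (some j)) = _; rw [aeval_X]; rfl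
  have hψy : ∀ j, ψ (X (some j)) = C (2⁻¹:K) * (X (some j) + G j) := by
    intro j; show aeval f' (X (some j)) = _; rw [aeval_X]; rfl
  have h1 : φ.comp ψ = AlgHom.id K R := by
    apply MvPolynomial.algHom_ext
    rintro (_ | j)
    · show φ (ψ (X none)) = X none
      rw [show (X (none : Option (Fin r)) : R) = x from rfl, hψx, hφx]
    · show φ (ψ (X (some j))) = X (some j)
      rw [hψy j, map_mul, map_add, hφy j, hφG j]
      have hc : φ (C (2⁻¹:K)) = C (2⁻¹:K) := by
        rw [show (C (2⁻¹:K) : R) = algebraMap K R 2⁻¹ from rfl, AlgHom.commutes]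
      rw [hc, sub_add_cancel, ← mul_assoc, hC2, one_mul]
  have h2 : ψ.comp φ = AlgHom.id K R := by
    apply MvPolynomial.algHom_ext
    rintro (_ | j)
    · show ψ (φ (X none)) = X none
      rw [show (X (none : Option (Fin r)) : R) = x from rfl, hφx, hψx]
    · show ψ (φ (X (some j))) = X (some j)
      rw [hφy j, map_sub, map_mul, hψy j, hψG j, map_ofNat]
      rw [show (2:R) * (C (2⁻¹:K) * (X (some j) + G j))
          = (C (2⁻¹:K) * 2) * (X (some j) + G j) from by ring, hC2, one_mul,
        add_sub_cancel_right]
  let ρ : R ≃ₐ[K] R := AlgEquiv.ofAlgHom φ ψ h1 h2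
  have hρx : ρ x = x := hφx
  have hρy : ∀ j, ρ (X (some j)) = 2 * X (some j) - G j := hφy
  have hρsymm : ∀ p, ρ.symm (ρ p) = p := fun p => by
    show ψ (φ p) = p
    exact DFunLike.congr_fun h2 p
  have hρsymmx : ρ.symm x = x := hψx
  have hCconst : ∀ c : K, ρ.symm (C c) = C c := by
    intro c
    rw [show (C c : R) = algebraMap K R c from rfl]
    exact (ρ.symm : R ≃ₐ[K] R).commutes c
  -- commutation
  let E : Derivation K R R :=
    { toLinearMap := ρ.symm.toLinearMap.comp (D.toLinearMap.comp ρ.toLinearMap)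
      map_one_eq_zero' := by
        simp only [LinearMap.coe_comp, Function.comp_apply, AlgEquiv.toLinearMap_apply,
          Derivation.coeFn_coe, map_one, Derivation.map_one_eq_zero, map_zero]
      leibniz' := by
        intro p q
        simp only [LinearMap.coe_comp, Function.comp_apply, AlgEquiv.toLinearMap_apply,
          Derivation.coeFn_coe, map_mul, Derivation.leibniz, smul_eq_mul, map_add]
        rw [hρsymm p, hρsymm q] }
  have hEapp : ∀ p, E p = ρ.symm (D (ρ p)) := fun p => rfl
  have hE : E = D := by
    apply derivation_ext
    rintro (_ | j)
    · rw [hEapp, show (X (none : Option (Fin r)) : R) = x from rfl, hρx, hDx, map_one]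
    · rw [hEapp]
      have hstep : D (ρ (X (some j))) = C a * ρ (X (some j)) + B j := by
        rw [hρy j, show (2:R) * X (some j) - G j = (X (some j) - G j) + X (some j) from by
          ring, map_add, hkey j, hDy j]
        simp only [hB]
        ring
      have hρsG : ρ.symm (B j) = B j := by
        rw [hB]; rw [← Polynomial.aeval_algHom_apply, hρsymmx]
      rw [hstep, map_add, map_mul, hCconst, hρsymm, hρsG, hDy j, hB]
  have hcomm : ∀ p, ρ (D p) = D (ρ p) := by
    intro p
    have := congrArg (fun (E' : Derivation K R R) => E' p) hE
    simp only [hEapp] at this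
    rw [← this, AlgEquiv.apply_symm_apply]
  -- ρ is not the identity
  let j0 : Fin r := ⟨0, hr⟩
  have hρne : ρ ≠ AlgEquiv.refl := by
    intro h
    have h' : ρ (X (some j0)) = X (some j0) := by rw [h]; rfl
    rw [hρy j0] at h'
    have hco := congrArg (MvPolynomial.coeff (Finsupp.single (some j0) 1)) h'
    rw [coeff_sub, coeff_X] at hco
    have hG0 : MvPolynomial.coeff (Finsupp.single (some j0) 1) (G j0) = 0 := by
      rw [hG]; exact coeff_aeval_none j0 (g j0)
    have h2X : MvPolynomial.coeff (Finsupp.single (some j0) 1) ((2:R) * X (some j0))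
        = 2 := by
      rw [show (2:R) = C (2:K) from (map_ofNat (C : K →+* R) 2).symm, coeff_C_mul, coeff_X, if_pos rfl,
        mul_one]
    rw [h2X, hG0, sub_zero] at hco
    norm_num at hco
  refine ⟨⟨ρ, hcomm, hρne⟩, ?_⟩
  -- the ideal
  refine ⟨Ideal.span {X (some j0) - G j0}, ?_, ?_, ?_⟩
  · intro p hp
    rw [Ideal.mem_span_singleton] at hp ⊢
    obtain ⟨c, rfl⟩ := hp
    have hDl : D ((X (some j0) - G j0) * c)
        = C a * (X (some j0) - G j0) * c + (X (some j0) - G j0) * D c := by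
      rw [Derivation.leibniz, hkey j0, smul_eq_mul, smul_eq_mul]
      ring
    exact ⟨C a * c + D c, by rw [hDl]; ring⟩
  · intro h
    rw [Ideal.span_eq_bot] at h
    have h0 : (X (some j0) - G j0 : R) = 0 := h _ rfl
    have hco := congrArg (MvPolynomial.coeff (Finsupp.single (some j0) 1)) h0
    rw [coeff_sub, coeff_X, if_pos rfl, hG, coeff_aeval_none j0 (g j0), sub_zero] at hco
    exact one_ne_zero hco
  · intro h
    have h1' : (1 : R) ∈ Ideal.span {X (some j0) - G j0} := h ▸ Submodule.mem_top
    rw [Ideal.mem_span_singleton] at h1'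
    obtain ⟨c, hc⟩ := h1'
    -- evaluate at a zero of X (some j0) - G j0
    let v : Option (Fin r) → K := fun i => i.elim 0 (fun j => Polynomial.eval 0 (g j))
    have hev := congrArg (MvPolynomial.aeval (R := K) v) hc
    have hvx : MvPolynomial.aeval (R := K) v x = 0 := by
      rw [hx]; rw [aeval_X]; rfl
    have hvG : MvPolynomial.aeval (R := K) v (G j0) = Polynomial.eval 0 (g j0) := by
      rw [hG]
      rw [← Polynomial.aeval_algHom_apply, hvx, Polynomial.aeval_def, Polynomial.eval₂_at_zero]
      simp [Polynomial.coeff_zero_eq_eval_zero]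
    have hvy : MvPolynomial.aeval (R := K) v (X (some j0)) = Polynomial.eval 0 (g j0) := by
      rw [aeval_X]; rfl
    rw [map_one, map_mul, map_sub, hvy, hvG, sub_self, zero_mul] at hev
    exact one_ne_zero hev
end
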